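/- arXiv:1402.3018 — 6 statements merged into one kernel-verified Lean document; each statement's English description precedes it below -/
import Mathlib

section
/- Let q be a prime power, n ≥ 1, and let Y be a subset of F_q^n. Then for every integer d ≥ 0, HF(F_q^n, d) · |Y| ≤ HF(Y, d) · q^n. -/
set_option linter.unusedSectionVars false
set_option linter.dupNamespace false
set_option maxHeartbeats 1000000


open MvPolynomial

noncomputable section

/-- The affine Hilbert function of an ideal `I`: the dimension of
`A_{≤d} / I_{≤d}`. -/
def affineHF {k : Type*} [Field k] {n : ℕ} (I : Ideal (MvPolynomial (Fin n) k)) (d : ℕ) : ℕ :=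
  Module.finrank k
    ((MvPolynomial.restrictTotalDegree (Fin n) k d) ⧸
      (Submodule.comap (MvPolynomial.restrictTotalDegree (Fin n) k d).subtype
        (Submodule.restrictScalars k I)))

/-- The affine Hilbert function of a set `X ⊆ k^n`. -/
def HF {k : Type*} [Field k] {n : ℕ} (X : Set (Fin n → k)) (d : ℕ) : ℕ :=
  affineHF (MvPolynomial.vanishingIdeal k X) d

/-- The degree `d` closure of `Y ⊆ k^n`. -/
def clDeg {k : Type*} [Field k] {n : ℕ} (d : ℕ) (Y : Set (Fin n → k)) :
    Set (Fin n → k) :=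
  {x | ∀ P : MvPolynomial (Fin n) k, P.totalDegree ≤ d →
    (∀ y ∈ Y, MvPolynomial.eval y P = 0) → MvPolynomial.eval x P = 0}

/-- The ideal `I^m(X)` of polynomials vanishing to order at least `m`
at every point of `X`. -/
def orderIdeal {k : Type*} [Field k] {n : ℕ} (m : ℕ) (X : Set (Fin n → k)) :
    Ideal (MvPolynomial (Fin n) k) :=
  ⨅ x ∈ X, (MvPolynomial.vanishingIdeal k ({x} : Set (Fin n → k))) ^ m

/-- The Hilbert function with multiplicity `m` of a set `X ⊆ k^n`. -/
def HFm {k : Type*} [Field k] {n : ℕ} (m : ℕ) (X : Set (Fin n → k)) (d : ℕ) : ℕ :=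
  affineHF (orderIdeal m X) d

/-- `cl_d^{ℓ,m}(Y)`: points where all degree-`≤ d` polynomials vanishing
to order `m` on `Y` vanish to order `ℓ`. -/
def clDegMult {k : Type*} [Field k] {n : ℕ} (d l m : ℕ) (Y : Set (Fin n → k)) :
    Set (Fin n → k) :=
  {x | ∀ P : MvPolynomial (Fin n) k, P.totalDegree ≤ d → P ∈ orderIdeal m Y →
    P ∈ (MvPolynomial.vanishingIdeal k ({x} : Set (Fin n → k))) ^ l}

/-- An affine line in `k^n`. -/
def IsAffineLine {k : Type*} [Field k] {n : ℕ} (L : Set (Fin n → k)) : Prop :=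
  ∃ a v : Fin n → k, v ≠ 0 ∧ L = {p | ∃ t : k, p = a + t • v}

/-- A curve of degree at most `Λ` in `k^n`. -/
def IsCurveOfDegree {k : Type*} [Field k] {n : ℕ} (Λ : ℕ) (C : Set (Fin n → k)) : Prop :=
  ∃ f : Fin n → Polynomial k, (∀ i, (f i).natDegree ≤ Λ) ∧
    C = Set.range fun t : k => fun i => (f i).eval t


namespace S0Aux

open Finset Submodule

/-! ### A graded-lex-like key, encoded numerically in base `q`. -/

def key (n q : ℕ) (a : Fin n → ℕ) : ℕ :=
  (∑ i, a i) * q ^ n + ∑ i, a i * q ^ (i : ℕ)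

lemma key_add (n q : ℕ) (a b : Fin n → ℕ) :
    key n q (a + b) = key n q a + key n q b := by
  simp only [key, Pi.add_apply, Finset.sum_add_distrib, add_mul]
  ring

lemma key_mono {n q : ℕ} {a b : Fin n → ℕ} (h : ∀ i, a i ≤ b i) :
    key n q a ≤ key n q b := by
  unfold key
  have h1 : ∑ i, a i ≤ ∑ i, b i := Finset.sum_le_sum fun i _ => h i
  have h2 : ∑ i, a i * q ^ (i : ℕ) ≤ ∑ i, b i * q ^ (i : ℕ) :=
    Finset.sum_le_sum fun i _ => Nat.mul_le_mul_right _ (h i)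
  exact Nat.add_le_add (Nat.mul_le_mul_right _ h1) h2

lemma digits_lt {n q : ℕ} {a : Fin n → ℕ} (ha : ∀ i, a i < q) :
    ∑ i, a i * q ^ (i : ℕ) < q ^ n := by
  have : ∑ i, a i * q ^ (i : ℕ) = ∑ i, ((fun i => (⟨a i, ha i⟩ : Fin q)) i : ℕ) * q ^ (i : ℕ) := rfl
  rw [this, ← finFunctionFinEquiv_apply]
  exact (finFunctionFinEquiv _).isLt

lemma key_sum_le {n q : ℕ} {a b : Fin n → ℕ} (hb : ∀ i, b i < q)
    (h : key n q a ≤ key n q b) : ∑ i, a i ≤ ∑ i, b i := by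
  by_contra hc
  push_neg at hc
  have h2 := digits_lt hb
  have : key n q b < key n q a := by
    unfold key
    calc (∑ i, b i) * q ^ n + ∑ i, b i * q ^ (i : ℕ)
        < (∑ i, b i) * q ^ n + q ^ n := by omega
      _ = (∑ i, b i + 1) * q ^ n := by ring
      _ ≤ (∑ i, a i) * q ^ n := Nat.mul_le_mul_right _ (by omega)
      _ ≤ _ := Nat.le_add_right _ _
  omega

lemma key_grid_inj {n q : ℕ} {a b : Fin n → ℕ} (ha : ∀ i, a i < q) (hb : ∀ i, b i < q)
    (h : key n q a = key n q b) : a = b := by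
  have hs : ∑ i, a i = ∑ i, b i :=
    le_antisymm (key_sum_le hb h.le) (key_sum_le ha h.ge)
  have hd : ∑ i, a i * q ^ (i : ℕ) = ∑ i, b i * q ^ (i : ℕ) := by
    unfold key at h
    rw [hs] at h
    omega
  have : (fun i => (⟨a i, ha i⟩ : Fin q)) = (fun i => (⟨b i, hb i⟩ : Fin q)) := by
    apply finFunctionFinEquiv.injective
    apply Fin.ext
    rw [finFunctionFinEquiv_apply, finFunctionFinEquiv_apply]
    exact hd
  funext i
  have := congrFun this i
  simpa using congrArg Fin.val this

/-! ### The grid index type with its graded-lex linear order. -/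

structure GIdx (n q : ℕ) where
  val : Fin n → Fin q

def gEquiv (n q : ℕ) : GIdx n q ≃ (Fin n → Fin q) where
  toFun := GIdx.val
  invFun := GIdx.mk
  left_inv _ := rfl
  right_inv _ := rfl

instance (n q : ℕ) : Fintype (GIdx n q) := Fintype.ofEquiv _ (gEquiv n q).symm

def GIdx.toN {n q : ℕ} (a : GIdx n q) : Fin n → ℕ := fun i => (a.val i : ℕ)

lemma GIdx.toN_lt {n q : ℕ} (a : GIdx n q) : ∀ i, a.toN i < q := fun i => (a.val i).isLt

lemma GIdx.key_injective {n q : ℕ} :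
    Function.Injective (fun a : GIdx n q => key n q a.toN) := by
  intro a b h
  have := key_grid_inj a.toN_lt b.toN_lt h
  cases a; cases b
  simp only [GIdx.mk.injEq]
  funext i
  exact Fin.ext (congrFun this i)

instance (n q : ℕ) : LinearOrder (GIdx n q) :=
  LinearOrder.lift' (fun a => key n q a.toN) GIdx.key_injective

lemma GIdx.lt_iff {n q : ℕ} {a b : GIdx n q} : a < b ↔ key n q a.toN < key n q b.toN :=
  Iff.rfl

lemma GIdx.le_iff {n q : ℕ} {a b : GIdx n q} : a ≤ b ↔ key n q a.toN ≤ key n q b.toN :=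
  Iff.rfl

/-! ### The greedy / footprint argument. -/

variable (K : Type*) [Field K] {M : Type*} [AddCommGroup M] [Module K M]
  {ι : Type*} [Fintype ι] [LinearOrder ι] (v : ι → M)

/-- The "pivot" set of a family of vectors indexed by a finite linear order. -/
def piv : Set ι := {i | v i ∉ span K (v '' {j | j < i})}

lemma piv_indep : LinearIndependent K (fun i : piv K v => v i) := by
  rw [linearIndependent_iff']
  intro s g hsum i hi
  by_contra hgi
  letI : DecidableEq K := Classical.decEq K
  set t := s.filter (fun i => g i ≠ 0) with ht
  have hts : ∑ j ∈ t, g j • v ↑j = 0 := by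
    rw [← hsum]
    apply Finset.sum_subset (Finset.filter_subset _ s)
    intro x hx hxt
    simp only [Finset.mem_filter, hx, true_and, not_not] at hxt
    rw [hxt, zero_smul]
  have htne : t.Nonempty := ⟨i, Finset.mem_filter.2 ⟨hi, hgi⟩⟩
  set i₀ := t.max' htne with hi₀
  have hgi₀ : g i₀ ≠ 0 := (Finset.mem_filter.1 (t.max'_mem htne)).2
  have hmem : v ↑i₀ ∈ span K (v '' {j | j < ↑i₀}) := by
    have h1 : g i₀ • v ↑i₀ = - ∑ j ∈ t.erase i₀, g j • v ↑j := by
      apply eq_neg_of_add_eq_zero_left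
      rw [← hts]
      exact Finset.add_sum_erase t (fun j => g j • v ↑j) (t.max'_mem htne)
    have h2 : v ↑i₀ = (g i₀)⁻¹ • (g i₀ • v ↑i₀) := by
      rw [smul_smul, inv_mul_cancel₀ hgi₀, one_smul]
    rw [h2, h1]
    apply Submodule.smul_mem
    apply Submodule.neg_mem
    apply Submodule.sum_mem
    intro j hj
    apply Submodule.smul_mem
    apply Submodule.subset_span
    refine ⟨↑j, ?_, rfl⟩
    have hji : j < i₀ :=
      lt_of_le_of_ne (Finset.le_max' t j (Finset.mem_of_mem_erase hj))
        (Finset.ne_of_mem_erase hj)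
    exact Subtype.coe_lt_coe.mpr hji
  exact i₀.2 hmem

lemma span_piv_inter (S : Set ι) (hS : IsLowerSet S) :
    span K (v '' S) = span K (v '' (piv K v ∩ S)) := by
  refine le_antisymm ?_ (span_mono (Set.image_mono Set.inter_subset_right))
  rw [span_le]
  suffices H : ∀ i : ι, i ∈ S → v i ∈ span K (v '' (piv K v ∩ S)) by
    rintro _ ⟨i, hiS, rfl⟩
    exact H i hiS
  intro i
  induction i using WellFoundedLT.induction with
  | _ i IH =>
    intro hiS
    by_cases hD : i ∈ piv K v
    · exact subset_span ⟨i, ⟨hD, hiS⟩, rfl⟩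
    · have hv : v i ∈ span K (v '' {j | j < i}) := not_not.mp hD
      refine span_le.mpr ?_ hv
      rintro _ ⟨j, hj, rfl⟩
      exact IH j hj (hS (le_of_lt hj) hiS)

lemma finrank_span_lowerSet (S : Set ι) (hS : IsLowerSet S) :
    Module.finrank K (span K (v '' S)) = (piv K v ∩ S).ncard := by
  classical
  rw [span_piv_inter K v S hS]
  have hind : LinearIndependent K (fun i : ↥(piv K v ∩ S) => v ↑i) :=
    (piv_indep K v).comp (Set.inclusion Set.inter_subset_left)
      (Set.inclusion_injective Set.inter_subset_left)
  rw [show v '' (piv K v ∩ S) = Set.range (fun i : ↥(piv K v ∩ S) => v ↑i) from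
    Set.image_eq_range _ _]
  rw [finrank_span_eq_card hind, ← Nat.card_coe_set_eq, Nat.card_eq_fintype_card]

section FieldStuff

open MvPolynomial Submodule

variable {K : Type*} [Field K] [Fintype K] {n q : ℕ}

def red (q m : ℕ) : ℕ := if m = 0 then 0 else (m - 1) % (q - 1) + 1

lemma red_le (m : ℕ) : red q m ≤ m := by
  unfold red; split
  · omega
  · have := Nat.mod_le (m - 1) (q - 1); omega

lemma red_lt (hq2 : 2 ≤ q) (m : ℕ) : red q m < q := by
  unfold red; split
  · omega
  · have := Nat.mod_lt (m - 1) (y := q - 1) (by omega); omega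

lemma pow_red (hq : Fintype.card K = q) (t : K) (m : ℕ) : t ^ red q m = t ^ m := by
  rcases eq_or_ne m 0 with rfl | hm
  · simp [red]
  · have hq2 : 2 ≤ q := hq ▸ Fintype.one_lt_card
    have hred : red q m = (m - 1) % (q - 1) + 1 := by unfold red; simp [hm]
    have hdecomp : m = (q - 1) * ((m - 1) / (q - 1)) + red q m := by
      rw [hred]
      have := Nat.div_add_mod (m - 1) (q - 1)
      omega
    rcases eq_or_ne t 0 with rfl | ht
    · rw [zero_pow (by omega : red q m ≠ 0), zero_pow hm]
    · conv_rhs => rw [hdecomp]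
      rw [pow_add, pow_mul]
      rw [show q - 1 = Fintype.card K - 1 by rw [hq]]
      rw [FiniteField.pow_card_sub_one_eq_one t ht, one_pow, one_mul]

/-- The function `x ↦ x^a` on `K^n`. -/
def mono (K : Type*) [Field K] {n : ℕ} (a : Fin n → ℕ) : (Fin n → K) → K :=
  fun x => ∏ i, x i ^ a i

lemma mono_red (hq : Fintype.card K = q) (a : Fin n → ℕ) :
    mono K (fun i => red q (a i)) = mono K a := by
  funext x
  exact Finset.prod_congr rfl fun i _ => pow_red hq _ _

lemma mono_add (a b : Fin n → ℕ) : mono K (a + b) = mono K a * mono K b := by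
  funext x
  simp [mono, pow_add, Finset.prod_mul_distrib]

/-- Evaluation of polynomials, as a linear map into the function space. -/
def evalLM (K : Type*) [Field K] (n : ℕ) : MvPolynomial (Fin n) K →ₗ[K] ((Fin n → K) → K) where
  toFun P := fun x => MvPolynomial.eval x P
  map_add' P Q := by funext x; simp
  map_smul' c P := by funext x; simp [MvPolynomial.smul_eq_C_mul]

/-- Restriction of functions to a subset. -/
def resMap (K : Type*) [Field K] {n : ℕ} (X : Set (Fin n → K)) :
    ((Fin n → K) → K) →ₗ[K] (X → K) :=
  LinearMap.funLeft K K Subtype.val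

lemma evalLM_monomial (u : Fin n →₀ ℕ) :
    evalLM K n (MvPolynomial.monomial u (1 : K)) = mono K (fun i => u i) := by
  funext x
  simp only [evalLM, LinearMap.coe_mk, AddHom.coe_mk, MvPolynomial.eval_monomial, one_mul, mono]
  exact Finsupp.prod_fintype _ _ fun i => pow_zero _

lemma evalLM_eq_sum (P : MvPolynomial (Fin n) K) :
    evalLM K n P = ∑ u ∈ P.support, P.coeff u • mono K (fun i => u i) := by
  funext x
  simp only [evalLM, LinearMap.coe_mk, AddHom.coe_mk, Finset.sum_apply, Pi.smul_apply, mono,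
    smul_eq_mul]
  exact MvPolynomial.eval_eq' x P

lemma evalLM_mem_span (hq : Fintype.card K = q) (X : Set (Fin n → K)) (d : ℕ)
    (P : MvPolynomial (Fin n) K) (hP : ∀ u ∈ P.support, ∑ i, red q ((u : Fin n →₀ ℕ) i) ≤ d) :
    resMap K X (evalLM K n P) ∈ span K ((fun a : Fin n → ℕ => resMap K X (mono K a)) ''
      {a | (∀ i, a i < q) ∧ ∑ i, a i ≤ d}) := by
  have hq2 : 2 ≤ q := hq ▸ Fintype.one_lt_card
  rw [evalLM_eq_sum, map_sum]
  apply sum_mem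
  intro u hu
  rw [LinearMap.map_smul]
  apply Submodule.smul_mem
  apply subset_span
  refine ⟨fun i => red q (u i), ⟨fun i => red_lt hq2 _, hP u hu⟩, ?_⟩
  show (resMap K X) (mono K fun i => red q (u i)) = (resMap K X) (mono K fun i => u i)
  rw [mono_red hq]

lemma sum_red_le_totalDegree {P : MvPolynomial (Fin n) K} {u : Fin n →₀ ℕ}
    (hu : u ∈ P.support) : ∑ i, red q (u i) ≤ P.totalDegree := by
  calc ∑ i, red q (u i) ≤ ∑ i, u i := Finset.sum_le_sum fun i _ => red_le _
    _ = u.sum fun _ e => e := (Finsupp.sum_fintype u (fun _ e => e) (fun i => rfl)).symm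
    _ ≤ P.totalDegree := MvPolynomial.le_totalDegree hu

lemma HF_eq_finrank_span (hq : Fintype.card K = q) (X : Set (Fin n → K)) (d : ℕ) :
    HF X d = Module.finrank K (span K ((fun a : Fin n → ℕ => resMap K X (mono K a)) ''
      {a | (∀ i, a i < q) ∧ ∑ i, a i ≤ d})) := by
  classical
  set V := MvPolynomial.restrictTotalDegree (Fin n) K d with hV
  set Φ : V →ₗ[K] (X → K) := (resMap K X).comp ((evalLM K n).comp V.subtype) with hΦ
  have hker : Submodule.comap V.subtype
      (Submodule.restrictScalars K (MvPolynomial.vanishingIdeal K X)) = LinearMap.ker Φ := by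
    ext P
    simp only [Submodule.mem_comap, Submodule.restrictScalars_mem, LinearMap.mem_ker,
      MvPolynomial.mem_vanishingIdeal_iff]
    constructor
    · intro h
      funext x
      exact h x x.2
    · intro h x hx
      exact congrFun h ⟨x, hx⟩
  have h1 : HF X d = Module.finrank K (V ⧸ LinearMap.ker Φ) := by
    rw [HF, affineHF, hker]
  rw [h1, LinearEquiv.finrank_eq Φ.quotKerEquivRange]
  have hrange : LinearMap.range Φ = span K ((fun a : Fin n → ℕ => resMap K X (mono K a)) ''
      {a | (∀ i, a i < q) ∧ ∑ i, a i ≤ d}) := by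
    apply le_antisymm
    · rintro _ ⟨P, rfl⟩
      exact evalLM_mem_span hq X d P.val fun u hu =>
        le_trans (sum_red_le_totalDegree hu)
          ((MvPolynomial.mem_restrictTotalDegree _ _ _).mp P.2)
    · rw [span_le]
      rintro _ ⟨a, ⟨ha, hd⟩, rfl⟩
      have hmem : (MvPolynomial.monomial (Finsupp.equivFunOnFinite.symm a) (1 : K)) ∈ V := by
        rw [hV, MvPolynomial.mem_restrictTotalDegree,
          MvPolynomial.totalDegree_monomial _ one_ne_zero]
        rw [Finsupp.sum_fintype _ (fun _ e => e) (fun i => rfl)]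
        simpa using hd
      refine ⟨⟨_, hmem⟩, ?_⟩
      show resMap K X (evalLM K n (MvPolynomial.monomial (Finsupp.equivFunOnFinite.symm a) 1)) =
        (fun a => (resMap K X) (mono K a)) a
      rw [evalLM_monomial]
      congr 1
  rw [hrange]


lemma span_mono_top (hq : Fintype.card K = q) (Y : Set (Fin n → K)) :
    span K ((fun a : Fin n → ℕ => resMap K Y (mono K a)) ''
      {a | (∀ i, a i < q) ∧ ∑ i, a i ≤ n * (q - 1)}) = ⊤ := by
  classical
  have hq2 : 2 ≤ q := hq ▸ Fintype.one_lt_card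
  haveI : Fintype ↥Y := (Set.toFinite Y).fintype
  rw [eq_top_iff]
  intro f _
  rw [pi_eq_sum_univ f]
  apply sum_mem
  intro y _
  apply Submodule.smul_mem
  have hind : (fun j : Y => if y = j then (1 : K) else 0) =
      resMap K Y (evalLM K n (MvPolynomial.indicator (y : Fin n → K))) := by
    funext x
    show _ = MvPolynomial.eval (x : Fin n → K) (MvPolynomial.indicator (y : Fin n → K))
    rcases eq_or_ne y x with rfl | hxy
    · simp [MvPolynomial.eval_indicator_apply_eq_one]
    · rw [if_neg hxy, MvPolynomial.eval_indicator_apply_eq_zero]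
      exact fun h => hxy (Subtype.ext h.symm)
  rw [hind]
  apply evalLM_mem_span hq
  intro u hu
  calc ∑ i, red q (u i) ≤ ∑ _i : Fin n, (q - 1) :=
        Finset.sum_le_sum fun i _ => by have := red_lt hq2 (u i); omega
    _ = n * (q - 1) := by simp [Finset.sum_const, mul_comm]

variable (K) in
/-- The family of restricted monomial functions indexed by the grid. -/
def wFam (q : ℕ) {n : ℕ} (Y : Set (Fin n → K)) : GIdx n q → (Y → K) :=
  fun a => resMap K Y (mono K a.toN)

/-- Grid points of degree at most `d`. -/
def SL (n q d : ℕ) : Set (GIdx n q) := {a | ∑ i, a.toN i ≤ d}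

lemma SL_lower (n q d : ℕ) : IsLowerSet (SL n q d) := by
  intro a b hab hb
  exact le_trans (key_sum_le a.toN_lt hab) hb

lemma image_toN_SL (n q d : ℕ) :
    GIdx.toN '' SL n q d = {a : Fin n → ℕ | (∀ i, a i < q) ∧ ∑ i, a i ≤ d} := by
  ext a
  constructor
  · rintro ⟨g, hg, rfl⟩
    exact ⟨g.toN_lt, hg⟩
  · rintro ⟨ha, hd⟩
    exact ⟨GIdx.mk (fun i => ⟨a i, ha i⟩), hd, rfl⟩

lemma HF_eq_ncard (hq : Fintype.card K = q) (X : Set (Fin n → K)) (d : ℕ) :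
    HF X d = (piv K (wFam K q X) ∩ SL n q d).ncard := by
  rw [HF_eq_finrank_span hq X d, ← image_toN_SL n q d, Set.image_image]
  exact finrank_span_lowerSet K (wFam K q X) (SL n q d) (SL_lower n q d)

lemma grid_eq_SL (n q : ℕ) (hq2 : 2 ≤ q) :
    {a : Fin n → ℕ | (∀ i, a i < q) ∧ ∑ i, a i ≤ n * (q - 1)} = {a | ∀ i, a i < q} := by
  ext a
  simp only [Set.mem_setOf_eq, and_iff_left_iff_imp]
  intro ha
  calc ∑ i, a i ≤ ∑ _i : Fin n, (q - 1) := Finset.sum_le_sum fun i _ => by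
        have := ha i; omega
    _ = n * (q - 1) := by simp [Finset.sum_const, mul_comm]

lemma ncard_piv (hq : Fintype.card K = q) (Y : Set (Fin n → K)) :
    (piv K (wFam K q Y)).ncard = Y.ncard := by
  classical
  have hq2 : 2 ≤ q := hq ▸ Fintype.one_lt_card
  haveI : Fintype ↥Y := (Set.toFinite Y).fintype
  have h1 := finrank_span_lowerSet K (wFam K q Y) Set.univ isLowerSet_univ
  have h2 : GIdx.toN '' (Set.univ : Set (GIdx n q)) = {a : Fin n → ℕ | ∀ i, a i < q} := by
    ext a
    constructor
    · rintro ⟨g, _, rfl⟩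
      exact g.toN_lt
    · intro ha
      exact ⟨GIdx.mk (fun i => ⟨a i, ha i⟩), trivial, rfl⟩
  have h3 : wFam K q Y '' Set.univ =
      (fun a : Fin n → ℕ => resMap K Y (mono K a)) '' {a | ∀ i, a i < q} := by
    rw [← h2, Set.image_image]
    rfl
  rw [h3, ← grid_eq_SL n q hq2, span_mono_top hq Y] at h1
  rw [Set.inter_univ] at h1
  rw [← h1, finrank_top, Module.finrank_pi, ← Nat.card_eq_fintype_card,
    Nat.card_coe_set_eq]


lemma piv_downclosed (hq : Fintype.card K = q) (Y : Set (Fin n → K))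
    {g g' : Fin n → Fin q} (hle : g' ≤ g) (hg : GIdx.mk g ∈ piv K (wFam K q Y)) :
    GIdx.mk g' ∈ piv K (wFam K q Y) := by
  have hq2 : 2 ≤ q := hq ▸ Fintype.one_lt_card
  by_contra hg'
  apply hg
  have hg'mem : wFam K q Y (GIdx.mk g') ∈
      span K (wFam K q Y '' {j | j < GIdx.mk g'}) := not_not.mp hg'
  set w := wFam K q Y with hw
  set b : Fin n → ℕ := (GIdx.mk g').toN with hb
  set a : Fin n → ℕ := (GIdx.mk g).toN with ha
  have hba : ∀ i, b i ≤ a i := fun i => hle i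
  set wd : Fin n → ℕ := fun i => a i - b i with hwd
  have hbw : wd + b = a := funext fun i => by
    show (a i - b i) + b i = a i
    have := hba i
    omega
  set μ : (↥Y → K) →ₗ[K] (↥Y → K) := LinearMap.mulLeft K (resMap K Y (mono K wd)) with hμ
  have hres : ∀ c : Fin n → ℕ, μ (resMap K Y (mono K c)) = resMap K Y (mono K (wd + c)) := by
    intro c
    rw [hμ, LinearMap.mulLeft_apply, mono_add]
    rfl
  have hwa : w (GIdx.mk g) = μ (w (GIdx.mk g')) := by
    show resMap K Y (mono K a) = μ (resMap K Y (mono K b))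
    rw [hres b, hbw]
  rw [hwa]
  have h2 : μ (w (GIdx.mk g')) ∈ span K (μ '' (w '' {j | j < GIdx.mk g'})) := by
    rw [← Submodule.map_span]
    exact Submodule.mem_map_of_mem hg'mem
  refine span_le.mpr ?_ h2
  rintro _ ⟨_, ⟨j, hj, rfl⟩, rfl⟩
  apply subset_span
  refine ⟨GIdx.mk (fun i => ⟨red q ((wd + j.toN) i), red_lt hq2 _⟩), ?_, ?_⟩
  · show key n q _ < key n q a
    calc key n q (fun i => red q ((wd + j.toN) i))
        ≤ key n q (wd + j.toN) := key_mono fun i => red_le _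
      _ < key n q (wd + b) := by
          rw [key_add, key_add]
          have hjb : key n q j.toN < key n q b := hj
          omega
      _ = key n q a := by rw [hbw]
  · show resMap K Y (mono K (fun i => red q ((wd + j.toN) i))) = μ (w j)
    rw [mono_red hq, ← hres j.toN]
    rfl

lemma val_injective {n q : ℕ} : Function.Injective (GIdx.val : GIdx n q → (Fin n → Fin q)) :=
  fun a b h => by cases a; cases b; cases h; rfl

lemma mem_val_image_iff {n q : ℕ} {D : Set (GIdx n q)} {g : Fin n → Fin q} :
    g ∈ GIdx.val '' D ↔ GIdx.mk g ∈ D := by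
  constructor
  · rintro ⟨j, hj, rfl⟩
    cases j
    exact hj
  · intro h
    exact ⟨_, h, rfl⟩

end FieldStuff

end S0Aux

open S0Aux FinsetFamily in
/-- `HF(F_q^n, d) · |Y| ≤ HF(Y, d) · q^n`. -/
theorem statement0 (K : Type*) [Field K] [Fintype K] (q n : ℕ) (hq : Fintype.card K = q)
    (hn : 1 ≤ n) (Y : Set (Fin n → K)) (d : ℕ) :
    HF (Set.univ : Set (Fin n → K)) d * Y.ncard ≤ HF Y d * q ^ n := by
  classical
  have hq2 : 2 ≤ q := hq ▸ Fintype.one_lt_card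
  set D : Set (GIdx n q) := piv K (wFam K q Y) with hD
  set DS : Set (Fin n → Fin q) := GIdx.val '' D with hDS
  set LS : Set (Fin n → Fin q) := {g | ∑ i, (g i : ℕ) ≤ d} with hLS
  set DF : Finset (Fin n → Fin q) := DS.toFinset with hDF
  set LF : Finset (Fin n → Fin q) := LS.toFinset with hLF
  -- `val` image of SL is LS
  have hvalSL : GIdx.val '' SL n q d = LS := by
    ext g
    constructor
    · rintro ⟨j, hj, rfl⟩
      exact hj
    · intro hg
      exact ⟨GIdx.mk g, hg, rfl⟩
  -- Harris / Daykin inequality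
  have harris := Finset.le_card_infs_mul_card_sups DF LF
  have hsup : (DF ⊻ LF).card ≤ q ^ n := by
    calc (DF ⊻ LF).card ≤ Fintype.card (Fin n → Fin q) := Finset.card_le_univ _
      _ = q ^ n := by simp [hq]
  have hinf : (DF ⊼ LF) ⊆ DF ∩ LF := by
    intro c hc
    rw [Finset.mem_infs] at hc
    obtain ⟨g, hgD, l, hlL, rfl⟩ := hc
    rw [hDF, Set.mem_toFinset] at hgD
    rw [hLF, Set.mem_toFinset] at hlL
    rw [Finset.mem_inter, hDF, hLF, Set.mem_toFinset, Set.mem_toFinset]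
    constructor
    · rw [hDS, mem_val_image_iff] at hgD ⊢
      exact piv_downclosed hq Y (inf_le_left : g ⊓ l ≤ g) hgD
    · have hlL' : ∑ i, (l i : ℕ) ≤ d := hlL
      show ∑ i, (((g ⊓ l) : Fin n → Fin q) i : ℕ) ≤ d
      refine le_trans (Finset.sum_le_sum fun i _ => ?_) hlL'
      exact Fin.le_def.mp ((inf_le_right : g ⊓ l ≤ l) i)
  -- cardinalities
  have hDFcard : DF.card = Y.ncard := by
    rw [hDF, ← Set.ncard_eq_toFinset_card', hDS,
      Set.ncard_image_of_injective _ (val_injective), hD, ncard_piv hq Y]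
  have hDLcard : (DF ∩ LF).card = HF Y d := by
    have : DF ∩ LF = (DS ∩ LS).toFinset := by
      rw [Set.toFinset_inter]
    rw [this, ← Set.ncard_eq_toFinset_card']
    have himg : DS ∩ LS = GIdx.val '' (D ∩ SL n q d) := by
      rw [Set.image_inter (val_injective), hvalSL]
    rw [himg, Set.ncard_image_of_injective _ (val_injective)]
    exact (HF_eq_ncard hq Y d).symm
  have hLFcard : HF (Set.univ : Set (Fin n → K)) d ≤ LF.card := by
    rw [HF_eq_ncard hq Set.univ d, hLF, ← Set.ncard_eq_toFinset_card', ← hvalSL,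
      Set.ncard_image_of_injective _ (val_injective)]
    exact Set.ncard_le_ncard Set.inter_subset_right (Set.toFinite _)
  calc HF (Set.univ : Set (Fin n → K)) d * Y.ncard
      ≤ LF.card * DF.card := Nat.mul_le_mul hLFcard hDFcard.ge
    _ = DF.card * LF.card := Nat.mul_comm _ _
    _ ≤ (DF ⊼ LF).card * (DF ⊻ LF).card := harris
    _ ≤ (DF ∩ LF).card * q ^ n := Nat.mul_le_mul (Finset.card_le_card hinf) hsup
    _ = HF Y d * q ^ n := by rw [hDLcard]

end
end

section
/- Let q be a prime power, n ≥ 1, and let Y be a subset of F_q^n. Then for every integer d ≥ 0, HF(F_q^n, d) · |cl_d(Y)| ≤ q^n · |Y|. -/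
open MvPolynomial

noncomputable section

section Aux

open Module Submodule LinearMap

variable {K : Type*} [Field K] [Fintype K] {n d : ℕ}

/-- The evaluation functional at `x` on the space of polynomials of degree ≤ d. -/
def eps (d : ℕ) (x : Fin n → K) :
    Module.Dual K (restrictTotalDegree (Fin n) K d) :=
  ((MvPolynomial.aeval x).toLinearMap : MvPolynomial (Fin n) K →ₗ[K] K) ∘ₗ
    (restrictTotalDegree (Fin n) K d).subtype

omit [Fintype K] in
lemma eps_apply (x : Fin n → K) (P : restrictTotalDegree (Fin n) K d) :
    eps d x P = MvPolynomial.eval x (P : MvPolynomial (Fin n) K) := by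
  simp [eps, MvPolynomial.coe_aeval_eq_eval]

/-- Key lemma: HF X d equals the rank of the span of evaluation functionals. -/
lemma HF_eq_finrank_span (X : Set (Fin n → K)) (d : ℕ) :
    HF X d = finrank K (span K (eps (K := K) (n := n) d '' X)) := by
  classical
  haveI : Fintype ↑X := (Set.toFinite X).fintype
  set R := restrictTotalDegree (Fin n) K d
  let Φ : R →ₗ[K] (X → K) := LinearMap.pi (fun x : X => eps d x.1)
  have hker : (Submodule.comap R.subtype
      (Submodule.restrictScalars K (MvPolynomial.vanishingIdeal K X))) = LinearMap.ker Φ := by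
    ext P
    simp only [Submodule.mem_comap, Submodule.restrictScalars_mem,
      MvPolynomial.mem_vanishingIdeal_iff, LinearMap.mem_ker]
    constructor
    · intro h
      funext x
      simpa [Φ, LinearMap.pi_apply] using (eps_apply (d := d) x.1 P).trans (h x.1 x.2)
    · intro h x hx
      have := congrFun h ⟨x, hx⟩
      exact (eps_apply (d := d) x P).symm.trans (by simpa [Φ, LinearMap.pi_apply] using this)
  have h1 : HF X d = finrank K (R ⧸ LinearMap.ker Φ) := by
    unfold HF affineHF
    rw [hker]
  have h2 : finrank K (R ⧸ LinearMap.ker Φ) = finrank K (LinearMap.range Φ) :=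
    Φ.quotKerEquivRange.finrank_eq
  have h3 : finrank K (LinearMap.range Φ.dualMap) = finrank K (LinearMap.range Φ) :=
    LinearMap.finrank_range_dualMap_eq_finrank_range Φ
  have h4 : LinearMap.range Φ.dualMap = span K (eps (K := K) (n := n) d '' X) := by
    apply le_antisymm
    · rintro φ ⟨ψ, rfl⟩
      have hψ : Φ.dualMap ψ = ∑ x : X, ψ ((Pi.single x 1 : X → K)) • eps d x.1 := by
        ext P
        have hdecomp : Φ P = ∑ x : X, Φ P x • (Pi.single x 1 : X → K) := by
          funext j
          simp [Finset.sum_apply, Pi.single_apply]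
        rw [LinearMap.dualMap_apply]
        rw [show ψ (Φ P) = ψ (∑ x : X, Φ P x • (Pi.single x 1 : X → K)) by rw [← hdecomp]]
        simp [Φ, LinearMap.pi_apply, mul_comm]
      rw [hψ]
      exact Submodule.sum_mem _ fun x _ =>
        Submodule.smul_mem _ _ (Submodule.subset_span ⟨x.1, x.2, rfl⟩)
    · rw [Submodule.span_le]
      rintro φ ⟨x, hx, rfl⟩
      exact ⟨LinearMap.proj (⟨x, hx⟩ : X), rfl⟩
  rw [h1, h2, ← h3, h4]

/-- Translation by `t` on polynomials: `P(X) ↦ P(X + t)`. -/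
def trAlg (t : Fin n → K) : MvPolynomial (Fin n) K →ₐ[K] MvPolynomial (Fin n) K :=
  MvPolynomial.aeval (fun i => MvPolynomial.X i + MvPolynomial.C (t i))

omit [Fintype K] in
lemma totalDegree_trAlg_le (t : Fin n → K) (P : MvPolynomial (Fin n) K) :
    (trAlg t P).totalDegree ≤ P.totalDegree := by
  conv_lhs => rw [P.as_sum]
  rw [map_sum]
  refine MvPolynomial.totalDegree_finsetSum_le fun v hv => ?_
  rw [MvPolynomial.monomial_eq, map_mul]
  refine le_trans (MvPolynomial.totalDegree_mul _ _) ?_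
  have hC : (trAlg t (MvPolynomial.C (MvPolynomial.coeff v P))).totalDegree = 0 := by
    simp [trAlg, MvPolynomial.totalDegree_C]
  rw [hC, zero_add]
  rw [Finsupp.prod, map_prod]
  refine le_trans (MvPolynomial.totalDegree_finset_prod _ _) ?_
  refine le_trans (Finset.sum_le_sum (g := fun i => v i) (fun i _ => ?_)) ?_
  · show (trAlg t (MvPolynomial.X i ^ v i)).totalDegree ≤ v i
    rw [map_pow]
    refine le_trans (MvPolynomial.totalDegree_pow _ _) ?_
    have : (trAlg t (MvPolynomial.X i)).totalDegree ≤ 1 := by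
      simp only [trAlg, MvPolynomial.aeval_X]
      refine le_trans (MvPolynomial.totalDegree_add _ _) ?_
      simp [MvPolynomial.totalDegree_X, MvPolynomial.totalDegree_C]
    calc v i * (trAlg t (MvPolynomial.X i)).totalDegree ≤ v i * 1 :=
          Nat.mul_le_mul_left _ this
      _ = v i := Nat.mul_one _
  · calc ∑ i ∈ v.support, v i = v.sum (fun _ e => e) := rfl
      _ ≤ P.totalDegree := MvPolynomial.le_totalDegree hv

omit [Fintype K] in
lemma trAlg_comp (t : Fin n → K) :
    (trAlg (-t)).comp (trAlg t) = AlgHom.id K (MvPolynomial (Fin n) K) := by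
  apply MvPolynomial.algHom_ext
  intro i
  simp [trAlg, MvPolynomial.aeval_X]

omit [Fintype K] in
lemma eval_trAlg (t x : Fin n → K) (P : MvPolynomial (Fin n) K) :
    MvPolynomial.eval x (trAlg t P) = MvPolynomial.eval (x + t) P := by
  have h : (MvPolynomial.aeval x : MvPolynomial (Fin n) K →ₐ[K] K).comp (trAlg t)
      = MvPolynomial.aeval (x + t) := by
    apply MvPolynomial.algHom_ext
    intro i
    simp [trAlg]
  have := congrArg (fun f => (f : MvPolynomial (Fin n) K →ₐ[K] K) P) h
  simpa [MvPolynomial.coe_aeval_eq_eval] using this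

/-- Translation as a linear map on the space of polynomials of degree ≤ d. -/
def trR (t : Fin n → K) :
    restrictTotalDegree (Fin n) K d →ₗ[K] restrictTotalDegree (Fin n) K d :=
  LinearMap.codRestrict _ ((trAlg t).toLinearMap ∘ₗ (restrictTotalDegree (Fin n) K d).subtype)
    (fun P => by
      rw [MvPolynomial.mem_restrictTotalDegree]
      exact le_trans (totalDegree_trAlg_le t P.1)
        ((MvPolynomial.mem_restrictTotalDegree _ _ _).1 P.2))

omit [Fintype K] in
lemma trR_apply (t : Fin n → K) (P : restrictTotalDegree (Fin n) K d) :
    ((trR (d := d) t P : restrictTotalDegree (Fin n) K d) : MvPolynomial (Fin n) K)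
      = trAlg t (P : MvPolynomial (Fin n) K) := rfl

/-- Translation as a linear equivalence. -/
def trEquiv (t : Fin n → K) :
    restrictTotalDegree (Fin n) K d ≃ₗ[K] restrictTotalDegree (Fin n) K d :=
  LinearEquiv.ofLinear (trR t) (trR (-t))
    (by
      refine LinearMap.ext fun P => Subtype.ext ?_
      have := congrArg (fun f => (f : MvPolynomial (Fin n) K →ₐ[K] MvPolynomial (Fin n) K)
        (P : MvPolynomial (Fin n) K)) (by simpa using trAlg_comp (-t))
      simpa [trR_apply] using this)
    (by
      refine LinearMap.ext fun P => Subtype.ext ?_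
      have := congrArg (fun f => (f : MvPolynomial (Fin n) K →ₐ[K] MvPolynomial (Fin n) K)
        (P : MvPolynomial (Fin n) K)) (trAlg_comp t)
      simpa [trR_apply] using this)

omit [Fintype K] in
lemma eps_translate (t x : Fin n → K) :
    eps (n := n) d (x + t) = (trEquiv (d := d) t).dualMap (eps d x) := by
  ext P
  rw [LinearEquiv.dualMap_apply]
  rw [eps_apply, eps_apply]
  show MvPolynomial.eval (x + t) (P : MvPolynomial (Fin n) K) = _
  rw [show ((trEquiv (d := d) t P : restrictTotalDegree (Fin n) K d) :
      MvPolynomial (Fin n) K) = trAlg t (P : MvPolynomial (Fin n) K) from rfl]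
  rw [eval_trAlg]

omit [Fintype K] in
lemma finrank_span_eps_translate (S : Set (Fin n → K)) (t : Fin n → K) :
    finrank K (span K (eps (K := K) (n := n) d '' ((fun x => x + t) '' S)))
      = finrank K (span K (eps (K := K) (n := n) d '' S)) := by
  have himg : eps (K := K) (n := n) d '' ((fun x => x + t) '' S)
      = (trEquiv (d := d) t).dualMap '' (eps (K := K) (n := n) d '' S) := by
    rw [Set.image_image, Set.image_image]
    exact Set.image_congr fun x _ => eps_translate t x
  rw [himg]
  have := LinearEquiv.finrank_map_eq ((trEquiv (d := d) t).dualMap)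
    (span K (eps (K := K) (n := n) d '' S))
  rw [Submodule.map_span] at this
  exact this

/-- The main counting lemma: spreadness of evaluation functionals. -/
lemma main_count (d : ℕ) (S : Finset (Fin n → K)) :
    finrank K (span K (eps (K := K) (n := n) d '' Set.univ)) * S.card ≤
      Fintype.card (Fin n → K) *
        finrank K (span K (eps (K := K) (n := n) d '' (S : Set (Fin n → K)))) := by
  classical
  obtain ⟨b, hbsub, hbspan, hbind⟩ :=
    exists_linearIndependent K (eps (K := K) (n := n) d '' Set.univ)
  have hbfin : b.Finite := (Set.finite_univ.image _).subset hbsub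
  haveI := hbfin.fintype
  let pt : Module.Dual K (restrictTotalDegree (Fin n) K d) → (Fin n → K) :=
    fun φ => if h : ∃ x, eps (K := K) (n := n) d x = φ then h.choose else 0
  have hpt : ∀ φ ∈ b, eps (K := K) (n := n) d (pt φ) = φ := by
    intro φ hφ
    obtain ⟨x, -, hx⟩ := hbsub hφ
    have h : ∃ x, eps (K := K) (n := n) d x = φ := ⟨x, hx⟩
    simp only [pt, dif_pos h]
    exact h.choose_spec
  let B : Finset (Fin n → K) := b.toFinset.image pt
  have hBeps : ∀ x ∈ B, eps (K := K) (n := n) d x ∈ b := by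
    intro x hx
    obtain ⟨φ, hφ, rfl⟩ := Finset.mem_image.1 hx
    rw [hpt φ (Set.mem_toFinset.1 hφ)]
    exact Set.mem_toFinset.1 hφ
  have hBinj : Set.InjOn (eps (K := K) (n := n) d) B := by
    intro x hx y hy hxy
    obtain ⟨φ, hφ, rfl⟩ := Finset.mem_image.1 hx
    obtain ⟨φ', hφ', rfl⟩ := Finset.mem_image.1 hy
    rw [hpt φ (Set.mem_toFinset.1 hφ), hpt φ' (Set.mem_toFinset.1 hφ')] at hxy
    rw [hxy]
  have hBcard : B.card = b.toFinset.card := by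
    apply Finset.card_image_of_injOn
    intro φ hφ φ' hφ' h
    rw [← hpt φ (Set.mem_toFinset.1 hφ), ← hpt φ' (Set.mem_toFinset.1 hφ'), h]
  have hh : finrank K (span K (eps (K := K) (n := n) d '' Set.univ)) = B.card := by
    rw [← hbspan, finrank_span_set_eq_card hbind, hBcard]
  -- per-translate bound
  set r := finrank K (span K (eps (K := K) (n := n) d '' (S : Set (Fin n → K)))) with hr
  have hper : ∀ t : Fin n → K, (B ∩ S.image (fun s => s + t)).card ≤ r := by
    intro t
    set St := S.image (fun s => s + t) with hSt
    have hrt : finrank K (span K (eps (K := K) (n := n) d '' (St : Set (Fin n → K)))) = r := by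
      rw [hSt, Finset.coe_image]
      exact finrank_span_eps_translate _ t
    haveI : FiniteDimensional K
        (span K (eps (K := K) (n := n) d '' (St : Set (Fin n → K)))) :=
      FiniteDimensional.span_of_finite K ((St.finite_toSet).image _)
    have hsub : eps (K := K) (n := n) d '' ((B ∩ St : Finset _) : Set (Fin n → K)) ⊆ b := by
      rintro φ ⟨x, hx, rfl⟩
      exact hBeps x (Finset.mem_of_mem_inter_left (by exact_mod_cast hx))
    have hind : LinearIndependent K
        ((↑) : (eps (K := K) (n := n) d '' ((B ∩ St : Finset _) : Set (Fin n → K))) →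
          Module.Dual K (restrictTotalDegree (Fin n) K d)) :=
      LinearIndepOn.mono (s := b) (v := id) hbind hsub
    have hcardim : finrank K (span K (eps (K := K) (n := n) d ''
        ((B ∩ St : Finset _) : Set (Fin n → K)))) = (B ∩ St).card := by
      rw [finrank_span_set_eq_card hind]
      rw [Set.toFinset_image]
      rw [Finset.card_image_of_injOn]
      · congr 1
        exact Finset.toFinset_coe _
      · intro x hx y hy hxy
        have hx' : x ∈ B := Finset.mem_of_mem_inter_left (by
          have := Set.mem_toFinset.1 hx; exact_mod_cast this)
        have hy' : y ∈ B := Finset.mem_of_mem_inter_left (by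
          have := Set.mem_toFinset.1 hy; exact_mod_cast this)
        exact hBinj hx' hy' hxy
    calc (B ∩ St).card
        = finrank K (span K (eps (K := K) (n := n) d ''
            ((B ∩ St : Finset _) : Set (Fin n → K)))) := hcardim.symm
      _ ≤ finrank K (span K (eps (K := K) (n := n) d '' (St : Set (Fin n → K)))) :=
          Submodule.finrank_mono (span_mono (Set.image_mono (by
            intro x hx
            have hx' : x ∈ B ∩ St := by exact_mod_cast hx
            exact_mod_cast Finset.mem_of_mem_inter_right hx')))
      _ = r := hrt
  -- double counting
  have hdouble : ∑ t : Fin n → K, (B ∩ S.image (fun s => s + t)).card = B.card * S.card := by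
    have step1 : ∀ t : Fin n → K, (B ∩ S.image (fun s => s + t)).card
        = ∑ x ∈ B, if x ∈ S.image (fun s => s + t) then 1 else 0 := by
      intro t
      rw [← Finset.filter_mem_eq_inter, Finset.card_filter]
    simp_rw [step1]
    rw [Finset.sum_comm]
    have inner : ∀ x ∈ B, (∑ t : Fin n → K, if x ∈ S.image (fun s => s + t) then 1 else 0)
        = S.card := by
      intro x _
      rw [← Finset.card_filter]
      apply Finset.card_bij' (fun t _ => x - t) (fun s _ => x - s)
      · intro t ht
        have := (Finset.mem_filter.1 ht).2
        obtain ⟨s, hs, hst⟩ := Finset.mem_image.1 this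
        have : x - t = s := by rw [← hst]; abel
        rwa [this]
      · intro s hs
        refine Finset.mem_filter.2 ⟨Finset.mem_univ _, ?_⟩
        refine Finset.mem_image.2 ⟨s, hs, ?_⟩
        abel
      · intro t _
        abel
      · intro s _
        abel
    rw [Finset.sum_congr rfl inner, Finset.sum_const, smul_eq_mul, mul_comm]
  calc finrank K (span K (eps (K := K) (n := n) d '' Set.univ)) * S.card
      = B.card * S.card := by rw [hh]
    _ = ∑ t : Fin n → K, (B ∩ S.image (fun s => s + t)).card := hdouble.symm
    _ ≤ ∑ _t : Fin n → K, r := Finset.sum_le_sum fun t _ => hper t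
    _ = Fintype.card (Fin n → K) * r := by
        rw [Finset.sum_const, smul_eq_mul, Finset.card_univ]

omit [Fintype K] in
/-- Monotonicity: `HF (cl_d Y) d ≤ HF Y d`. -/
lemma HF_clDeg_le (Y : Set (Fin n → K)) (d : ℕ) : HF (clDeg d Y) d ≤ HF Y d := by
  classical
  set R := restrictTotalDegree (Fin n) K d
  set NY := Submodule.comap R.subtype
    (Submodule.restrictScalars K (MvPolynomial.vanishingIdeal K Y)) with hNY
  set NC := Submodule.comap R.subtype
    (Submodule.restrictScalars K (MvPolynomial.vanishingIdeal K (clDeg d Y))) with hNC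
  have hle : NY ≤ Submodule.comap LinearMap.id NC := by
    intro P hP
    simp only [hNY, hNC, Submodule.mem_comap, Submodule.restrictScalars_mem,
      MvPolynomial.mem_vanishingIdeal_iff, LinearMap.id_coe, id_eq] at hP ⊢
    intro x hx
    exact hx (P : MvPolynomial (Fin n) K) ((MvPolynomial.mem_restrictTotalDegree _ _ _).1 P.2) hP
  let f : (R ⧸ NY) →ₗ[K] (R ⧸ NC) := Submodule.mapQ NY NC LinearMap.id hle
  have hsurj : Function.Surjective f := by
    intro z
    obtain ⟨P, rfl⟩ := Submodule.Quotient.mk_surjective _ z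
    exact ⟨Submodule.Quotient.mk P, by simp [f, Submodule.mapQ_apply]⟩
  have hfr := LinearMap.finrank_range_le f
  rw [LinearMap.range_eq_top.2 hsurj, finrank_top] at hfr
  exact hfr


end Aux

open Module Submodule LinearMap in
/-- `HF(F_q^n, d) · |cl_d(Y)| ≤ q^n · |Y|`. -/
theorem statement1 (K : Type*) [Field K] [Fintype K] (q n : ℕ) (hq : Fintype.card K = q)
    (hn : 1 ≤ n) (Y : Set (Fin n → K)) (d : ℕ) :
    HF (Set.univ : Set (Fin n → K)) d * (clDeg d Y).ncard ≤ q ^ n * Y.ncard := by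
  classical
  have hcard : Fintype.card (Fin n → K) = q ^ n := by
    rw [← hq]
    simp [Fintype.card_fun]
  set C := clDeg d Y with hCdef
  have hCfin : C.Finite := Set.toFinite _
  have hYfin : Y.Finite := Set.toFinite _
  set S := hCfin.toFinset with hSdef
  have hSC : (S : Set (Fin n → K)) = C := hCfin.coe_toFinset
  have hcount := main_count (K := K) (n := n) d S
  rw [hcard] at hcount
  have h1 : HF (Set.univ : Set (Fin n → K)) d
      = finrank K (span K (eps (K := K) (n := n) d '' Set.univ)) := HF_eq_finrank_span _ _
  have h2 : finrank K (span K (eps (K := K) (n := n) d '' (S : Set (Fin n → K)))) = HF C d := by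
    rw [hSC]; exact (HF_eq_finrank_span _ _).symm
  have h3 : HF C d ≤ HF Y d := HF_clDeg_le Y d
  have h4 : HF Y d ≤ Y.ncard := by
    rw [HF_eq_finrank_span]
    haveI : Fintype Y := hYfin.fintype
    haveI : Fintype (eps (K := K) (n := n) d '' Y : Set _) := (hYfin.image _).fintype
    calc finrank K (span K (eps (K := K) (n := n) d '' Y))
        ≤ (eps (K := K) (n := n) d '' Y).toFinset.card := finrank_span_le_card _
      _ ≤ Y.toFinset.card := by
          rw [Set.toFinset_image]
          exact Finset.card_image_le
      _ = Y.ncard := (Set.ncard_eq_toFinset_card' _).symm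
  have hCncard : C.ncard = S.card := Set.ncard_eq_toFinset_card _ hCfin
  calc HF (Set.univ : Set (Fin n → K)) d * C.ncard
      = finrank K (span K (eps (K := K) (n := n) d '' Set.univ)) * S.card := by
        rw [h1, hCncard]
    _ ≤ q ^ n * finrank K (span K (eps (K := K) (n := n) d '' (S : Set (Fin n → K)))) := hcount
    _ = q ^ n * HF C d := by rw [h2]
    _ ≤ q ^ n * Y.ncard := Nat.mul_le_mul_left _ (h3.trans h4)

end
end

section
/- Let q be a prime power, n ≥ 1, and let Y be a subset of F_q^n. If 0 ≤ d < q, then C(d+n, n) · |cl_d(Y)| ≤ q^n · |Y|, where C(d+n, n) denotes the binomial coefficient. -/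
open MvPolynomial

noncomputable section

namespace Stmt2Aux

variable {K : Type*} [Field K] [Fintype K]

def mres {n : ℕ} (X : Set (Fin n → K)) (e : Fin n → ℕ) : ↥X → K :=
  fun x => ∏ i, (x : Fin n → K) i ^ e i

def MM {n : ℕ} (d : ℕ) (X : Set (Fin n → K)) : Submodule K (↥X → K) :=
  Submodule.span K (mres X '' {e | ∑ i, e i ≤ d})

def rnk {n : ℕ} (d : ℕ) (X : Set (Fin n → K)) : ℕ := Module.finrank K (MM d X)

lemma rnk_le_ncard {n : ℕ} (d : ℕ) (X : Set (Fin n → K)) : rnk d X ≤ X.ncard := by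
  haveI : Fintype ↥X := Fintype.ofFinite ↥X
  calc rnk d X ≤ Module.finrank K (↥X → K) := Submodule.finrank_le _
  _ = X.ncard := by
      rw [Module.finrank_pi K, ← Nat.card_eq_fintype_card, Nat.card_coe_set_eq]

lemma one_le_rnk {n : ℕ} (d : ℕ) (X : Set (Fin n → K)) (hX : X.Nonempty) : 1 ≤ rnk d X := by
  haveI : Fintype ↥X := Fintype.ofFinite ↥X
  have h1 : mres X (0 : Fin n → ℕ) ∈ MM d X := by
    apply Submodule.subset_span
    exact ⟨0, by simp, rfl⟩
  have hne : mres X (0 : Fin n → ℕ) ≠ 0 := by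
    obtain ⟨x, hx⟩ := hX
    intro h
    have := congrFun h ⟨x, hx⟩
    simp [mres] at this
  have : Nontrivial ↥(MM d X) := by
    refine Submodule.nontrivial_iff_ne_bot.mpr ?_
    intro h
    exact hne (by simpa [h] using h1 : mres X 0 ∈ (⊥ : Submodule K (↥X → K)))
  exact Module.finrank_pos_iff.mpr this

def slice {n : ℕ} (X : Set (Fin (n+1) → K)) (c : K) : Set (Fin n → K) :=
  {x' | Fin.snoc x' c ∈ X}

lemma sum_slice_ncard {n : ℕ} (X : Set (Fin (n+1) → K)) :
    ∑ c : K, (slice X c).ncard = X.ncard := by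
  haveI : Fintype ↥X := Fintype.ofFinite ↥X
  classical
  have hfin : X.Finite := X.toFinite
  rw [Set.ncard_eq_toFinset_card' X]
  rw [Finset.card_eq_sum_card_fiberwise (f := fun x => x (Fin.last n)) (t := Finset.univ)
    (fun x _ => Finset.mem_univ _)]
  refine Finset.sum_congr rfl fun c _ => ?_
  rw [Set.ncard_eq_toFinset_card' (slice X c)]
  refine (Finset.card_bij' (fun x _ => Fin.init x) (fun x' _ => (Fin.snoc x' c : Fin (n+1) → K)) ?_ ?_ ?_ ?_).symm
  · intro x hx
    simp only [Finset.mem_filter, Set.mem_toFinset] at hx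
    have h3 : (Fin.snoc (Fin.init x) c : Fin (n+1) → K) = x := by
      rw [← hx.2]; exact Fin.snoc_init_self x
    simp only [Set.mem_toFinset, slice, Set.mem_setOf_eq, h3]
    exact Set.mem_toFinset.mpr (show (Fin.snoc (Fin.init x) c : Fin (n+1) → K) ∈ X by rw [h3]; exact hx.1)
  · intro x' hx'
    simp only [Set.mem_toFinset, slice, Set.mem_setOf_eq] at hx'
    simpa using (Set.mem_toFinset.mp hx' : x' ∈ {x' : Fin n → K | (Fin.snoc x' c : Fin (n+1) → K) ∈ X})
  · intro x hx
    simp only [Finset.mem_filter, Set.mem_toFinset] at hx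
    show (Fin.snoc (Fin.init x) c : Fin (n+1) → K) = x
    rw [← hx.2]; exact Fin.snoc_init_self x
  · intro x' _
    simp

open MvPolynomial in
lemma exists_poly_of_mem_MM {n d : ℕ} {X : Set (Fin n → K)} {f : ↥X → K}
    (hf : f ∈ MM d X) :
    ∃ P : MvPolynomial (Fin n) K, P.totalDegree ≤ d ∧
      ∀ x : ↥X, MvPolynomial.eval (x : Fin n → K) P = f x := by
  induction hf using Submodule.span_induction with
  | mem g hg =>
      obtain ⟨e, he, rfl⟩ := hg
      refine ⟨monomial (Finsupp.equivFunOnFinite.symm e) 1, ?_, ?_⟩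
      · refine (totalDegree_monomial_le _ _).trans ?_
        rw [Finsupp.sum_fintype]
        · simpa using he
        · simp
      · intro x
        rw [eval_monomial]
        simp [mres, Finsupp.prod_pow]
  | zero => exact ⟨0, by simp⟩
  | add g h _ _ ihg ihh =>
      obtain ⟨P, hP, hPe⟩ := ihg
      obtain ⟨Q, hQ, hQe⟩ := ihh
      exact ⟨P + Q, (totalDegree_add _ _).trans (by omega),
        fun x => by simp [hPe x, hQe x]⟩
  | smul c g _ ihg =>
      obtain ⟨P, hP, hPe⟩ := ihg
      exact ⟨c • P, (totalDegree_smul_le _ _).trans hP,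
        fun x => by rw [smul_eval, hPe x]; rfl⟩

open Polynomial in
lemma sum_rnk_slice_le {n d : ℕ} (X : Set (Fin (n+1) → K)) (t : Fin (d+1) → K)
    (ht : Function.Injective t) :
    ∑ j : Fin (d+1), rnk (d - (j : ℕ)) (slice X (t j)) ≤ rnk d X := by
  classical
  haveI : Fintype ↥X := Fintype.ofFinite ↥X
  haveI : ∀ j : Fin (d+1), Fintype ↥(slice X (t j)) := fun j => Fintype.ofFinite _
  -- choose independent spanning sets of monomial functions on each slice
  have hex := fun j : Fin (d+1) =>
    exists_linearIndependent K (mres (slice X (t j)) '' {e | ∑ i, e i ≤ d - (j : ℕ)})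
  choose B hBsub hBspan hBind using hex
  haveI : ∀ j : Fin (d+1), Fintype ↥(B j) := fun j => ((hBind j).setFinite).fintype
  -- each element of B j is a restricted monomial
  have hexp : ∀ (j : Fin (d+1)) (b : ↥(B j)), ∃ e : Fin n → ℕ,
      (∑ i, e i ≤ d - (j : ℕ)) ∧ mres (slice X (t j)) e = (b : ↥(slice X (t j)) → K) := by
    intro j b
    obtain ⟨e, he, hb⟩ := hBsub j b.2
    exact ⟨e, he, hb⟩
  choose ε hε1 hε2 using hexp
  -- the auxiliary polynomials
  set pj : Fin (d+1) → Polynomial K :=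
    fun j => ∏ l ∈ Finset.univ.filter (fun l => l < j), (Polynomial.X - Polynomial.C (t l)) with hpj
  have hfilt : ∀ j : Fin (d+1), Finset.univ.filter (fun l => l < j) = Finset.Iio j := by
    intro j; ext l; simp
  have hdeg : ∀ j : Fin (d+1), (pj j).natDegree ≤ (j : ℕ) := by
    intro j
    refine (Polynomial.natDegree_prod_le _ _).trans ?_
    refine (Finset.sum_le_card_nsmul _ _ 1 fun l _ => Polynomial.natDegree_X_sub_C_le _).trans ?_
    rw [hfilt, Fin.card_Iio]
    simp
  have hevalz : ∀ j j' : Fin (d+1), j < j' → (pj j').eval (t j) = 0 := by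
    intro j j' hjj'
    rw [hpj, Polynomial.eval_prod]
    refine Finset.prod_eq_zero (i := j) (by simp [hjj']) (by simp)
  have hevalnz : ∀ j : Fin (d+1), (pj j).eval (t j) ≠ 0 := by
    intro j
    rw [hpj, Polynomial.eval_prod]
    refine Finset.prod_ne_zero_iff.mpr fun l hl => ?_
    simp only [Finset.mem_filter] at hl
    simp only [Polynomial.eval_sub, Polynomial.eval_X, Polynomial.eval_C, sub_ne_zero]
    exact fun h => absurd (ht h.symm) (ne_of_lt hl.2)
  -- the lifted family
  set F : (Σ j : Fin (d+1), ↥(B j)) → (↥X → K) :=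
    fun i => fun x => (∏ k, Fin.init (x : Fin (n+1) → K) k ^ ε i.1 i.2 k) *
      (pj i.1).eval ((x : Fin (n+1) → K) (Fin.last n)) with hF
  -- F i belongs to MM d X
  have hmem : ∀ i, F i ∈ MM d X := by
    rintro ⟨j, b⟩
    have hrepr : F ⟨j, b⟩ = ∑ s ∈ Finset.range ((j : ℕ) + 1),
        (pj j).coeff s • mres X (Fin.snoc (ε j b) s) := by
      funext x
      rw [Finset.sum_apply]
      rw [hF]
      simp only
      rw [Polynomial.eval_eq_sum_range' (Nat.lt_succ_of_le (hdeg j))]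
      rw [Finset.mul_sum]
      refine Finset.sum_congr rfl fun s _ => ?_
      simp only [Pi.smul_apply, smul_eq_mul, mres]
      rw [Fin.prod_univ_castSucc]
      simp only [Fin.snoc_castSucc, Fin.snoc_last]
      have : ∀ k : Fin n, Fin.init (x : Fin (n+1) → K) k = (x : Fin (n+1) → K) k.castSucc :=
        fun k => rfl
      simp only [this]
      ring
    rw [hrepr]
    refine Submodule.sum_mem _ fun s hs => Submodule.smul_mem _ _ (Submodule.subset_span ?_)
    refine ⟨Fin.snoc (ε j b) s, ?_, rfl⟩
    simp only [Set.mem_setOf_eq]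
    rw [Fin.sum_univ_castSucc]
    simp only [Fin.snoc_castSucc, Fin.snoc_last]
    have h1 : ∑ i, ε j b i ≤ d - (j : ℕ) := hε1 j b
    have h2 : s ≤ (j : ℕ) := Nat.lt_succ_iff.mp (Finset.mem_range.mp hs)
    have h3 : (j : ℕ) ≤ d := Nat.lt_succ_iff.mp j.isLt
    omega
  -- linear independence of F
  have hFind : LinearIndependent K F := by
    rw [Fintype.linearIndependent_iff]
    intro g hg
    have key : ∀ m : ℕ, ∀ j : Fin (d+1), (j : ℕ) = m → ∀ b : ↥(B j), g ⟨j, b⟩ = 0 := by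
      intro m
      induction m using Nat.strong_induction_on with
      | _ m IH =>
        intro j hjm b
        -- evaluate at slice points
        have hslice : ∀ x' : ↥(slice X (t j)),
            (∑ b' : ↥(B j), g ⟨j, b'⟩ * mres (slice X (t j)) (ε j b') x') *
              (pj j).eval (t j) = 0 := by
          intro x'
          have hx : (Fin.snoc (x' : Fin n → K) (t j) : Fin (n+1) → K) ∈ X := x'.2
          have h0 := congrFun hg ⟨_, hx⟩
          rw [Finset.sum_apply] at h0
          simp only [Pi.smul_apply, smul_eq_mul, Pi.zero_apply] at h0
          rw [← Finset.univ_sigma_univ, Finset.sum_sigma] at h0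
          -- all terms with j' ≠ j vanish
          rw [Finset.sum_eq_single_of_mem j (Finset.mem_univ j)] at h0
          · rw [← h0, Finset.sum_mul]
            refine Finset.sum_congr rfl fun b' _ => ?_
            rw [hF]
            simp only [Fin.init_snoc, Fin.snoc_last, mres]
            ring
          · intro j' _ hj'
            rcases lt_or_gt_of_ne hj' with hlt | hgt
            · -- j' < j : coefficient is zero by induction hypothesis
              refine Finset.sum_eq_zero fun b' _ => ?_
              rw [IH (j' : ℕ) (by omega) j' rfl b']
              simp
            · -- j' > j : polynomial factor vanishes
              refine Finset.sum_eq_zero fun b' _ => ?_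
              rw [hF]
              simp only [Fin.snoc_last]
              rw [hevalz j j' hgt]
              simp
        have hsum0 : ∑ b' : ↥(B j), g ⟨j, b'⟩ • ((b' : ↥(slice X (t j)) → K)) = 0 := by
          funext x'
          have := hslice x'
          rcases mul_eq_zero.mp this with h | h
          · rw [Finset.sum_apply]
            simp only [Pi.smul_apply, smul_eq_mul, Pi.zero_apply]
            rw [← h]
            refine Finset.sum_congr rfl fun b' _ => ?_
            rw [← hε2 j b']
          · exact absurd h (hevalnz j)
        exact Fintype.linearIndependent_iff.mp (hBind j) _ hsum0 b
    intro i
    exact key (i.1 : ℕ) i.1 rfl i.2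
  -- conclude
  have hsub : LinearIndependent K (fun i => (⟨F i, hmem i⟩ : ↥(MM d X))) := by
    apply LinearIndependent.of_comp (MM d X).subtype
    exact hFind
  have hcard := hsub.fintype_card_le_finrank
  rw [Fintype.card_sigma] at hcard
  calc ∑ j : Fin (d+1), rnk (d - (j : ℕ)) (slice X (t j))
      = ∑ j : Fin (d+1), Fintype.card ↥(B j) := by
        refine Finset.sum_congr rfl fun j _ => ?_
        rw [rnk, MM, ← hBspan j, finrank_span_set_eq_card (hBind j), Set.toFinset_card]
    _ ≤ Module.finrank K ↥(MM d X) := hcard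
    _ = rnk d X := rfl

lemma core (n : ℕ) : ∀ d : ℕ, d < Fintype.card K → ∀ X : Set (Fin n → K),
    (d + n).choose n * X.ncard ≤ (Fintype.card K) ^ n * rnk d X := by
  induction n with
  | zero =>
    intro d hd X
    simp only [Nat.add_zero, Nat.choose_self, Nat.choose_zero_right, one_mul, pow_zero]
    rcases X.eq_empty_or_nonempty with rfl | hne
    · simp
    · have h1 : X.ncard ≤ 1 :=
        (Set.ncard_le_one X.toFinite).mpr fun a _ b _ => Subsingleton.elim a b
      exact h1.trans (one_le_rnk d X hne)
  | succ n IH =>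
    intro d hd X
    classical
    set q := Fintype.card K with hqdef
    have hq1 : 1 ≤ q := Fintype.card_pos
    set a : K → ℕ := fun c => (slice X c).ncard with ha
    obtain ⟨e⟩ : Nonempty (K ≃ Fin q) := ⟨Fintype.equivFinOfCardEq rfl⟩
    set f : Fin q → ℕ := a ∘ e.symm with hf
    set τe : Fin q ≃ K := Fin.revPerm.trans ((Tuple.sort f).trans e.symm) with hτe
    have hA : Antitone (fun i => a (τe i)) := by
      intro i j hij
      exact Tuple.monotone_sort f (Fin.rev_le_rev.mpr hij)
    have hdq : d + 1 ≤ q := hd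
    set t : Fin (d+1) → K := fun j => τe (Fin.castLE hdq j) with htdef
    have ht : Function.Injective t :=
      τe.injective.comp (Fin.castLE_injective hdq)
    set c : Fin q → ℕ := fun i => if (i : ℕ) ≤ d then (d - (i : ℕ) + n).choose n else 0 with hc
    have hcA : Antitone c := by
      intro i j hij
      simp only [hc]
      by_cases hj : (j : ℕ) ≤ d
      · have hi : (i : ℕ) ≤ d := le_trans hij hj
        simp only [hi, hj, if_true]
        exact Nat.choose_le_choose n (by omega)
      · simp [hj]
    -- reindexing sums over Fin q to sums over Fin (d+1)
    have hreindex : ∀ g : K → ℕ, ∑ i : Fin q, c i * g (τe i)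
        = ∑ j : Fin (d+1), (d - (j : ℕ) + n).choose n * g (t j) := by
      intro g
      have hvan : ∀ i ∈ (Finset.univ : Finset (Fin q)),
          i ∉ (Finset.univ : Finset (Fin (d+1))).map
            ⟨Fin.castLE hdq, Fin.castLE_injective hdq⟩ → c i * g (τe i) = 0 := by
        intro i _ hi
        have : ¬ (i : ℕ) ≤ d := by
          intro hle
          exact hi (Finset.mem_map.mpr ⟨⟨(i : ℕ), Nat.lt_succ_of_le hle⟩, Finset.mem_univ _,
            by ext; simp⟩)
        simp [hc, this]
      calc ∑ i : Fin q, c i * g (τe i)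
          = ∑ i ∈ (Finset.univ : Finset (Fin (d+1))).map
              ⟨Fin.castLE hdq, Fin.castLE_injective hdq⟩, c i * g (τe i) :=
            (Finset.sum_subset (Finset.subset_univ _) hvan).symm
        _ = ∑ j : Fin (d+1), c (Fin.castLE hdq j) * g (τe (Fin.castLE hdq j)) :=
            Finset.sum_map _ _ _
        _ = ∑ j : Fin (d+1), (d - (j : ℕ) + n).choose n * g (t j) := by
            refine Finset.sum_congr rfl fun j _ => ?_
            simp only [hc]
            have h5 : ((Fin.castLE hdq j : Fin q) : ℕ) = (j : ℕ) := rfl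
            rw [h5, if_pos (Nat.lt_succ_iff.mp j.isLt)]
    have hsuma : ∑ i : Fin q, a (τe i) = X.ncard := by
      rw [Equiv.sum_comp τe a, sum_slice_ncard]
    have hsumc : ∑ i : Fin q, c i = (d + (n+1)).choose (n+1) := by
      have h1 : ∑ i : Fin q, c i = ∑ i : Fin q, c i * (fun _ : K => 1) (τe i) := by
        simp
      rw [h1, hreindex (fun _ => 1)]
      simp only [mul_one]
      rw [Fin.sum_univ_eq_sum_range (fun j => (d - j + n).choose n) (d+1)]
      have h4 : ∑ j ∈ Finset.range (d+1), (d - j + n).choose n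
          = ∑ j ∈ Finset.range (d+1), (j + n).choose n := by
        rw [← Finset.sum_range_reflect (fun j => (j + n).choose n) (d+1)]
        refine Finset.sum_congr rfl fun j hj => ?_
        have hjd := Finset.mem_range.mp hj
        have h7 : d + 1 - 1 - j = d - j := by omega
        rw [h7]
      have hIcc : Finset.Icc n (d + n)
          = (Finset.range (d+1)).map ⟨fun j => j + n, add_left_injective n⟩ := by
        ext m
        simp only [Finset.mem_map, Finset.mem_range, Finset.mem_Icc,
          Function.Embedding.coeFn_mk]
        constructor
        · rintro ⟨h1, h2⟩
          exact ⟨m - n, by omega, by omega⟩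
        · rintro ⟨j, hj, rfl⟩
          omega
      have h3 : ∑ j ∈ Finset.range (d+1), (j + n).choose n = (d + n + 1).choose (n + 1) := by
        rw [← Nat.sum_Icc_choose (d + n) n, hIcc, Finset.sum_map]
        simp only [Function.Embedding.coeFn_mk]
      rw [h4, h3, Nat.add_assoc]
    have hcheb : (∑ i : Fin q, c i) * (∑ i : Fin q, a (τe i))
        ≤ q * ∑ i : Fin q, c i * a (τe i) := by
      have := (hcA.monovary hA).sum_mul_sum_le_card_mul_sum
      simpa [Fintype.card_fin] using this
    calc (d + (n+1)).choose (n+1) * X.ncard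
        = (∑ i : Fin q, c i) * (∑ i : Fin q, a (τe i)) := by rw [hsumc, hsuma]
      _ ≤ q * ∑ i : Fin q, c i * a (τe i) := hcheb
      _ = q * ∑ j : Fin (d+1), (d - (j : ℕ) + n).choose n * a (t j) := by rw [hreindex a]
      _ ≤ q * ∑ j : Fin (d+1), q ^ n * rnk (d - (j : ℕ)) (slice X (t j)) := by
          refine Nat.mul_le_mul_left q (Finset.sum_le_sum fun j _ => ?_)
          exact IH (d - (j : ℕ)) (by omega) (slice X (t j))
      _ = q ^ n * (q * ∑ j : Fin (d+1), rnk (d - (j : ℕ)) (slice X (t j))) := by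
          rw [← Finset.mul_sum]; ring
      _ ≤ q ^ n * (q * rnk d X) := by
          exact Nat.mul_le_mul_left _ (Nat.mul_le_mul_left _ (sum_rnk_slice_le X t ht))
      _ = q ^ (n+1) * rnk d X := by ring

theorem main {n : ℕ} (Y : Set (Fin n → K)) (d : ℕ) (hd : d < Fintype.card K) :
    (d + n).choose n * (clDeg d Y).ncard ≤ (Fintype.card K) ^ n * Y.ncard := by
  classical
  set cl := clDeg d Y with hcl
  haveI : Fintype ↥cl := Fintype.ofFinite _
  haveI : Fintype ↥Y := Fintype.ofFinite _
  have hYcl : Y ⊆ cl := fun y hy P _ hPv => hPv y hy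
  set ρ : (↥cl → K) →ₗ[K] (↥Y → K) :=
    LinearMap.funLeft K K (fun y : ↥Y => (⟨(y : Fin n → K), hYcl y.2⟩ : ↥cl)) with hρ
  have hmap : Submodule.map ρ (MM d cl) ≤ MM d Y := by
    rw [MM, Submodule.map_span]
    refine Submodule.span_le.mpr ?_
    rintro _ ⟨_, ⟨e, he, rfl⟩, rfl⟩
    exact Submodule.subset_span ⟨e, he, rfl⟩
  set g : ↥(MM d cl) →ₗ[K] (↥Y → K) := ρ.comp (MM d cl).subtype with hg
  have hker : LinearMap.ker g = ⊥ := by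
    rw [LinearMap.ker_eq_bot']
    intro f hf
    obtain ⟨P, hP, hPe⟩ := exists_poly_of_mem_MM f.2
    have hY0 : ∀ y ∈ Y, MvPolynomial.eval y P = 0 := by
      intro y hy
      have h0 : (f : ↥cl → K) ⟨y, hYcl hy⟩ = 0 := congrFun hf ⟨y, hy⟩
      exact (hPe ⟨y, hYcl hy⟩).trans h0
    have hf0 : (f : ↥cl → K) = 0 := by
      funext x
      rw [← hPe x]
      exact x.2 P hP hY0
    exact Subtype.ext hf0
  have hrnk : rnk d cl ≤ rnk d Y := by
    have h1 : Module.finrank K ↥(MM d cl)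
        = Module.finrank K ↥(LinearMap.range g) := by
      have := LinearMap.finrank_range_add_finrank_ker g
      rw [hker] at this
      simp only [finrank_bot, Nat.add_zero] at this
      exact this.symm
    have h2 : LinearMap.range g = Submodule.map ρ (MM d cl) := by
      rw [hg, LinearMap.range_comp, Submodule.range_subtype]
    rw [rnk, h1, h2]
    exact Submodule.finrank_mono hmap
  calc (d + n).choose n * cl.ncard
      ≤ (Fintype.card K) ^ n * rnk d cl := core n d hd cl
    _ ≤ (Fintype.card K) ^ n * rnk d Y := Nat.mul_le_mul_left _ hrnk
    _ ≤ (Fintype.card K) ^ n * Y.ncard := Nat.mul_le_mul_left _ (rnk_le_ncard d Y)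

end Stmt2Aux

/-- for `d < q`, `C(d+n, n) · |cl_d(Y)| ≤ q^n · |Y|`. -/
theorem statement2 (K : Type*) [Field K] [Fintype K] (q n : ℕ) (hq : Fintype.card K = q)
    (hn : 1 ≤ n) (Y : Set (Fin n → K)) (d : ℕ) (hd : d < q) :
    (d + n).choose n * (clDeg d Y).ncard ≤ q ^ n * Y.ncard := by
  subst hq
  exact Stmt2Aux.main Y d hd

end
end

section
/- Let 0 < α < 1 be a real number, let L_1, …, L_c be (affine) lines in F_q^n with X = ⋃_i L_i, and for each i pick a subset γ_i ⊆ L_i with |γ_i| > q^α; let Y = ⋃_i γ_i. Then |X| ≤ n! · q^{n(1−α)} · |Y|. -/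
open MvPolynomial

noncomputable section

set_option maxHeartbeats 1000000

namespace S4

open Finset Submodule Polynomial Module



open Finset

abbrev Mon (n : ℕ) := Fin n → ℕ

def deg {n : ℕ} (μ : Mon n) : ℕ := ∑ i, μ i

def cubeF (n q : ℕ) : Finset (Mon n) := Fintype.piFinset fun _ => Finset.range q

def simpF (n q d : ℕ) : Finset (Mon n) := (cubeF n q).filter (fun μ => deg μ ≤ d)

def slice {n : ℕ} (S : Finset (Mon (n+1))) (t : ℕ) : Finset (Mon n) :=
  (S.filter (fun μ => μ 0 = t)).image Fin.tail

lemma mem_slice {n : ℕ} {S : Finset (Mon (n+1))} {t : ℕ} {ν : Mon n} :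
    ν ∈ slice S t ↔ Fin.cons t ν ∈ S := by
  constructor
  · rintro h
    simp only [slice, mem_image, mem_filter] at h
    obtain ⟨μ, ⟨hμS, hμ0⟩, htail⟩ := h
    have : Fin.cons t ν = μ := by
      rw [← hμ0, ← htail, Fin.cons_self_tail]
    rwa [this]
  · intro h
    simp only [slice, mem_image, mem_filter]
    exact ⟨Fin.cons t ν, ⟨h, Fin.cons_zero _ _⟩, Fin.tail_cons _ _⟩

lemma cons_le_cons {n : ℕ} {a b : ℕ} {μ ν : Mon n} (h : a ≤ b) (h2 : μ ≤ ν) :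
    (Fin.cons a μ : Mon (n+1)) ≤ (Fin.cons b ν : Mon (n+1)) := by
  intro i
  induction i using Fin.cases with
  | zero => simpa using h
  | succ j => simpa using h2 j

lemma card_eq_sum_slices {n q : ℕ} {S : Finset (Mon (n+1))}
    (hb : ∀ μ ∈ S, ∀ i, μ i < q) :
    S.card = ∑ t ∈ range q, (slice S t).card := by
  rw [Finset.card_eq_sum_card_fiberwise (f := fun μ => μ 0) (t := range q)
    (fun μ hμ => by simpa using hb μ hμ 0)]
  refine Finset.sum_congr rfl fun t _ => ?_
  rw [slice, Finset.card_image_of_injOn]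
  intro μ1 h1 μ2 h2 htail
  simp only [mem_coe, mem_filter] at h1 h2
  rw [← Fin.cons_self_tail μ1, ← Fin.cons_self_tail μ2, h1.2, h2.2, htail]

lemma slice_inter {n : ℕ} (S T : Finset (Mon (n+1))) (t : ℕ) :
    slice (S ∩ T) t = slice S t ∩ slice T t := by
  ext ν; simp [mem_slice, Finset.mem_inter]

lemma slice_downset {n : ℕ} {S : Finset (Mon (n+1))} (t : ℕ)
    (hd : ∀ μ ∈ S, ∀ ν, ν ≤ μ → ν ∈ S) :
    ∀ μ ∈ slice S t, ∀ ν, ν ≤ μ → ν ∈ slice S t := by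
  intro μ hμ ν hν
  rw [mem_slice] at hμ ⊢
  exact hd _ hμ _ (cons_le_cons le_rfl hν)

lemma slice_bound {n q : ℕ} {S : Finset (Mon (n+1))} (t : ℕ)
    (hb : ∀ μ ∈ S, ∀ i, μ i < q) :
    ∀ μ ∈ slice S t, ∀ i, μ i < q := by
  intro μ hμ i
  rw [mem_slice] at hμ
  simpa using hb _ hμ i.succ

lemma slice_anti {n : ℕ} {S : Finset (Mon (n+1))}
    (hd : ∀ μ ∈ S, ∀ ν, ν ≤ μ → ν ∈ S) {t t' : ℕ} (h : t ≤ t') :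
    slice S t' ⊆ slice S t := by
  intro ν hν
  rw [mem_slice] at hν ⊢
  exact hd _ hν _ (cons_le_cons h le_rfl)

/-- Harris / FKG correlation inequality for two down-sets in `{0,…,q-1}^n`. -/
theorem harris (q : ℕ) : ∀ (n : ℕ) (S T : Finset (Mon n)),
    (∀ μ ∈ S, ∀ i, μ i < q) → (∀ μ ∈ T, ∀ i, μ i < q) →
    (∀ μ ∈ S, ∀ ν, ν ≤ μ → ν ∈ S) → (∀ μ ∈ T, ∀ ν, ν ≤ μ → ν ∈ T) →
    S.card * T.card ≤ q ^ n * (S ∩ T).card := by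
  intro n
  induction n with
  | zero =>
    intro S T _ _ _ _
    rcases S.eq_empty_or_nonempty with rfl | ⟨μ, hμ⟩
    · simp
    rcases T.eq_empty_or_nonempty with rfl | ⟨ν, hν⟩
    · simp
    have hμν : μ = ν := funext fun i => i.elim0
    have hcard : S.card ≤ 1 := Finset.card_le_one.2 fun a _ b _ =>
      funext fun i => i.elim0
    have hcard' : T.card ≤ 1 := Finset.card_le_one.2 fun a _ b _ =>
      funext fun i => i.elim0
    have : μ ∈ S ∩ T := Finset.mem_inter.2 ⟨hμ, hμν ▸ hν⟩
    have h1 : 1 ≤ (S ∩ T).card := Finset.card_pos.2 ⟨μ, this⟩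
    calc S.card * T.card ≤ 1 * 1 := Nat.mul_le_mul hcard hcard'
    _ ≤ q ^ 0 * (S ∩ T).card := by simpa using h1
  | succ n ih =>
    intro S T hbS hbT hdS hdT
    have key : ∀ t ∈ range q,
        (slice S t).card * (slice T t).card ≤ q ^ n * (slice S t ∩ slice T t).card :=
      fun t _ => ih _ _ (slice_bound t hbS) (slice_bound t hbT)
        (slice_downset t hdS) (slice_downset t hdT)
    have cheb : (∑ t ∈ range q, ((slice S t).card : ℚ)) *
        (∑ t ∈ range q, ((slice T t).card : ℚ)) ≤
        (q : ℚ) * ∑ t ∈ range q, ((slice S t).card : ℚ) * ((slice T t).card : ℚ) := by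
      have hmono : MonovaryOn (fun t => ((slice S t).card : ℚ))
          (fun t => ((slice T t).card : ℚ)) (range q) := by
        intro i _ j _ hlt
        have hji : j ≤ i := by
          by_contra h
          push_neg at h
          exact absurd (Nat.cast_le.2 (Finset.card_le_card (slice_anti hdT h.le)) :
            ((slice T j).card : ℚ) ≤ ((slice T i).card : ℚ)) (not_le.2 hlt)
        exact Nat.cast_le.2 (Finset.card_le_card (slice_anti hdS hji))
      have := hmono.sum_mul_sum_le_card_mul_sum
      simpa using this
    have hS : (S.card : ℚ) = ∑ t ∈ range q, ((slice S t).card : ℚ) := by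
      rw [card_eq_sum_slices hbS]; push_cast; ring
    have hT : (T.card : ℚ) = ∑ t ∈ range q, ((slice T t).card : ℚ) := by
      rw [card_eq_sum_slices hbT]; push_cast; ring
    have hST : ((S ∩ T).card : ℚ) = ∑ t ∈ range q,
        ((slice S t ∩ slice T t).card : ℚ) := by
      rw [card_eq_sum_slices (S := S ∩ T)
        (fun μ hμ => hbS μ (Finset.mem_inter.1 hμ).1)]
      push_cast
      refine Finset.sum_congr rfl fun t _ => by rw [slice_inter]
    have keyQ : ∀ t ∈ range q, ((slice S t).card : ℚ) * ((slice T t).card : ℚ) ≤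
        (q : ℚ) ^ n * ((slice S t ∩ slice T t).card : ℚ) := by
      intro t ht
      exact_mod_cast Nat.cast_le.2 (key t ht)
    have final : (S.card : ℚ) * (T.card : ℚ) ≤ (q : ℚ) ^ (n+1) * ((S ∩ T).card : ℚ) := by
      rw [hS, hT, hST]
      calc (∑ t ∈ range q, ((slice S t).card : ℚ)) * (∑ t ∈ range q, ((slice T t).card : ℚ))
          ≤ (q : ℚ) * ∑ t ∈ range q, ((slice S t).card : ℚ) * ((slice T t).card : ℚ) := cheb
        _ ≤ (q : ℚ) * ∑ t ∈ range q, (q : ℚ) ^ n * ((slice S t ∩ slice T t).card : ℚ) := by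
            refine mul_le_mul_of_nonneg_left (Finset.sum_le_sum keyQ) (by positivity)
        _ = (q : ℚ) ^ (n+1) * ∑ t ∈ range q, ((slice S t ∩ slice T t).card : ℚ) := by
            rw [← Finset.mul_sum]; ring
    exact_mod_cast final




open Finset

-- sublemma: (m+1)^n * m ≤ m^(n+1) + n*(m+1)^n
lemma bin_aux : ∀ (n m : ℕ), (m+1)^n * m ≤ m^(n+1) + n * (m+1)^n := by
  intro n
  induction n with
  | zero => intro m; simpa using le_refl m
  | succ n ih =>
    intro m
    have h1 : (m+1)^(n+1) * m = ((m+1)^n * m) * (m+1) := by ring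
    have h2 : ((m+1)^n * m) * (m+1) ≤ (m^(n+1) + n * (m+1)^n) * (m+1) :=
      Nat.mul_le_mul_right _ (ih m)
    have h3 : (m^(n+1) + n * (m+1)^n) * (m+1) = m^(n+2) + m^(n+1) + n * (m+1)^(n+1) := by ring
    have h4 : m^(n+1) ≤ (m+1)^(n+1) := Nat.pow_le_pow_left (Nat.le_succ m) _
    calc (m+1)^(n+1) * m = ((m+1)^n * m) * (m+1) := h1
      _ ≤ m^(n+2) + m^(n+1) + n * (m+1)^(n+1) := by rw [← h3]; exact h2
      _ ≤ m^(n+2) + (m+1)^(n+1) + n * (m+1)^(n+1) := by omega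
      _ = m^(n+1+1) + (n+1) * (m+1)^(n+1) := by ring

lemma bin_step (n m : ℕ) : (m+1)^(n+1) ≤ m^(n+1) + (n+1) * (m+1)^n := by
  calc (m+1)^(n+1) = (m+1)^n * m + (m+1)^n := by ring
    _ ≤ (m^(n+1) + n * (m+1)^n) + (m+1)^n := Nat.add_le_add_right (bin_aux n m) _
    _ = m^(n+1) + (n+1) * (m+1)^n := by ring

lemma psum (n : ℕ) : ∀ m : ℕ, m^(n+1) ≤ (n+1) * ∑ j ∈ range m, (j+1)^n := by
  intro m
  induction m with
  | zero => simp
  | succ m ih =>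
    have h := bin_step n m
    rw [Finset.sum_range_succ, Nat.mul_add]
    omega


lemma mem_simpF {n q d : ℕ} {μ : Mon n} :
    μ ∈ simpF n q d ↔ (∀ i, μ i < q) ∧ deg μ ≤ d := by
  simp [simpF, cubeF, Fintype.mem_piFinset]

lemma deg_cons {n : ℕ} (t : ℕ) (ν : Mon n) : deg (Fin.cons t ν : Mon (n+1)) = t + deg ν := by
  simp [deg, Fin.sum_cons]

lemma slice_simpF {n q d t : ℕ} (htd : t ≤ d) (htq : t < q) :
    slice (simpF (n+1) q d) t = simpF n q (d - t) := by
  ext ν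
  rw [mem_slice, mem_simpF, mem_simpF]
  constructor
  · rintro ⟨hb, hdeg⟩
    refine ⟨fun i => by simpa using hb i.succ, ?_⟩
    rw [deg_cons] at hdeg
    omega
  · rintro ⟨hb, hdeg⟩
    refine ⟨fun i => ?_, ?_⟩
    · induction i using Fin.cases with
      | zero => simpa using htq
      | succ j => simpa using hb j
    · rw [deg_cons]; omega

theorem pow_le_fact_mul_simpF (q : ℕ) : ∀ n d : ℕ, d < q →
    (d+1)^n ≤ n.factorial * (simpF n q d).card := by
  intro n
  induction n with
  | zero =>
    intro d _
    have : (fun i => i.elim0 : Mon 0) ∈ simpF 0 q d := by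
      rw [mem_simpF]
      exact ⟨fun i => i.elim0, by simp [deg]⟩
    have h1 : 1 ≤ (simpF 0 q d).card := Finset.card_pos.2 ⟨_, this⟩
    simpa using h1
  | succ n ih =>
    intro d hdq
    have hsb : ∀ μ ∈ simpF (n+1) q d, ∀ i, μ i < q := fun μ hμ => (mem_simpF.1 hμ).1
    have hcard : (simpF (n+1) q d).card = ∑ t ∈ range q, (slice (simpF (n+1) q d) t).card :=
      card_eq_sum_slices hsb
    have hsub : ∑ t ∈ range (d+1), (simpF n q (d-t)).card ≤ (simpF (n+1) q d).card := by
      rw [hcard]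
      have hss : range (d+1) ⊆ range q := by
        intro t ht; rw [Finset.mem_range] at ht ⊢; omega
      calc ∑ t ∈ range (d+1), (simpF n q (d-t)).card
          = ∑ t ∈ range (d+1), (slice (simpF (n+1) q d) t).card := by
            refine Finset.sum_congr rfl fun t ht => ?_
            rw [Finset.mem_range] at ht
            rw [slice_simpF (by omega) (by omega)]
        _ ≤ ∑ t ∈ range q, (slice (simpF (n+1) q d) t).card :=
            Finset.sum_le_sum_of_subset hss
    calc (d+1)^(n+1) ≤ (n+1) * ∑ j ∈ range (d+1), (j+1)^n := psum n (d+1)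
      _ = (n+1) * ∑ t ∈ range (d+1), (d+1-1-t+1)^n := by
          rw [← Finset.sum_range_reflect (fun j => (j+1)^n) (d+1)]
      _ ≤ (n+1) * ∑ t ∈ range (d+1), n.factorial * (simpF n q (d-t)).card := by
          refine Nat.mul_le_mul_left _ (Finset.sum_le_sum fun t ht => ?_)
          have : d+1-1-t = d-t := by omega
          rw [this]
          exact ih (d-t) (by omega)
      _ = (n+1) * n.factorial * ∑ t ∈ range (d+1), (simpF n q (d-t)).card := by
          rw [Finset.mul_sum, Finset.mul_sum]
          exact Finset.sum_congr rfl fun t _ => by ring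
      _ ≤ (n+1).factorial * (simpF (n+1) q d).card := by
          rw [Nat.factorial_succ]
          exact Nat.mul_le_mul_left _ hsub




def wt (q : ℕ) {n : ℕ} (μ : Mon n) : ℕ := ∑ i, μ i * ((2*q)^n + (2*q)^(i:ℕ))

lemma wt_add {q n : ℕ} (a b : Mon n) : wt q (a + b) = wt q a + wt q b := by
  rw [wt, wt, wt, ← Finset.sum_add_distrib]
  exact Finset.sum_congr rfl fun i _ => by simp [add_mul]

lemma wt_lt_of_le_of_ne {q n : ℕ} (hq : 0 < q) {a b : Mon n} (hle : a ≤ b) (hne : a ≠ b) :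
    wt q a < wt q b := by
  refine Finset.sum_lt_sum (fun i _ => Nat.mul_le_mul_right _ (hle i)) ?_
  have : ∃ i, a i ≠ b i := by
    by_contra h; push_neg at h; exact hne (funext h)
  obtain ⟨i, hi⟩ := this
  refine ⟨i, Finset.mem_univ i, ?_⟩
  have h1 : a i < b i := lt_of_le_of_ne (hle i) hi
  have h2 : 0 < (2*q)^n + (2*q)^(i:ℕ) := by positivity
  exact Nat.mul_lt_mul_of_lt_of_le h1 (le_refl _) h2

lemma digits_lt {B : ℕ} (hB : 0 < B) : ∀ {n : ℕ} (a : Mon n), (∀ i, a i < B) →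
    ∑ i, a i * B^(i:ℕ) < B^n := by
  intro n
  induction n with
  | zero => intro a _; simp
  | succ n ih =>
    intro a ha
    have h2 : ∑ i : Fin n, a i.castSucc * B ^ (i:ℕ) < B ^ n := by
      simpa using ih (fun j => a j.castSucc) (fun j => ha _)
    have h5 : a (Fin.last n) * B^n ≤ (B-1) * B^n :=
      Nat.mul_le_mul_right _ (by have := ha (Fin.last n); omega)
    have h4 : B^(n+1) = B^n + (B-1)*B^n := by
      have hB1 : B = 1 + (B-1) := by omega
      calc B^(n+1) = B * B^n := by ring
        _ = (1 + (B-1)) * B^n := by rw [← hB1]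
        _ = B^n + (B-1)*B^n := by ring
    rw [Fin.sum_univ_castSucc]
    simp only [Fin.coe_castSucc, Fin.val_last]
    omega

lemma split_unique {N x y r s : ℕ} (hN : 0 < N) (hr : r < N) (hs : s < N)
    (h : x*N + r = y*N + s) : x = y ∧ r = s := by
  have hx : (x*N + r) / N = x := by
    rw [Nat.mul_comm, Nat.mul_add_div hN, Nat.div_eq_of_lt hr]; omega
  have hy : (y*N + s) / N = y := by
    rw [Nat.mul_comm, Nat.mul_add_div hN, Nat.div_eq_of_lt hs]; omega
  have hxy : x = y := by rw [← hx, ← hy, h]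
  subst hxy
  exact ⟨rfl, by omega⟩

lemma digits_inj {B : ℕ} (hB : 0 < B) : ∀ {n : ℕ} (a b : Mon n), (∀ i, a i < B) →
    (∀ i, b i < B) → (∑ i, a i * B^(i:ℕ)) = (∑ i, b i * B^(i:ℕ)) → a = b := by
  intro n
  induction n with
  | zero => intro a b _ _ _; funext i; exact i.elim0
  | succ n ih =>
    intro a b ha hb h
    rw [Fin.sum_univ_castSucc, Fin.sum_univ_castSucc] at h
    simp only [Fin.coe_castSucc, Fin.val_last] at h
    have hla : ∑ i : Fin n, a i.castSucc * B ^ (i:ℕ) < B ^ n := by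
      simpa using digits_lt hB (fun j => a j.castSucc) (fun j => ha _)
    have hlb : ∑ i : Fin n, b i.castSucc * B ^ (i:ℕ) < B ^ n := by
      simpa using digits_lt hB (fun j => b j.castSucc) (fun j => hb _)
    have h' : a (Fin.last n) * B^n + ∑ i : Fin n, a i.castSucc * B ^ (i:ℕ) =
        b (Fin.last n) * B^n + ∑ i : Fin n, b i.castSucc * B ^ (i:ℕ) := by omega
    obtain ⟨he, hl⟩ := split_unique (by positivity) hla hlb h'
    have heq := ih _ _ (fun j => ha _) (fun j => hb _) (by simpa using hl)
    funext i
    induction i using Fin.lastCases with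
    | last => exact he
    | cast j => exact congrFun heq j

lemma wt_split {q n : ℕ} (μ : Mon n) :
    wt q μ = deg μ * (2*q)^n + ∑ i, μ i * (2*q)^(i:ℕ) := by
  rw [wt, deg, Finset.sum_mul, ← Finset.sum_add_distrib]
  exact Finset.sum_congr rfl fun i _ => by ring

lemma wt_ge {q n : ℕ} (μ : Mon n) : deg μ * (2*q)^n ≤ wt q μ := by
  rw [wt_split]; omega

lemma wt_lt_bound {q n : ℕ} (hq : 0 < q) {μ : Mon n} (hμ : ∀ i, μ i < 2*q) :
    wt q μ < (deg μ + 1) * (2*q)^n := by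
  have h1 := digits_lt (B := 2*q) (by omega) μ hμ
  rw [wt_split]
  have h2 : (deg μ + 1) * (2*q)^n = deg μ * (2*q)^n + (2*q)^n := by ring
  omega

lemma deg_le_of_wt_le {q n : ℕ} (hq : 0 < q) {a b : Mon n}
    (h : wt q a ≤ wt q b) (hb : ∀ i, b i < 2*q) : deg a ≤ deg b := by
  have h1 := wt_ge (q := q) a
  have h2 := wt_lt_bound hq hb
  have h3 : deg a * (2*q)^n < (deg b + 1) * (2*q)^n := by omega
  have := Nat.lt_of_mul_lt_mul_right h3
  omega

lemma wt_inj {q n : ℕ} (hq : 0 < q) {a b : Mon n} (ha : ∀ i, a i < 2*q)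
    (hb : ∀ i, b i < 2*q) (h : wt q a = wt q b) : a = b := by
  have hla := digits_lt (B := 2*q) (by omega) a ha
  have hlb := digits_lt (B := 2*q) (by omega) b hb
  rw [wt_split, wt_split] at h
  have h' : deg a * (2*q)^n + ∑ i, a i * (2*q)^(i:ℕ) =
      deg b * (2*q)^n + ∑ i, b i * (2*q)^(i:ℕ) := h
  obtain ⟨_, hl⟩ := split_unique (by positivity) hla hlb h'
  exact digits_inj (by omega) a b ha hb hl

variable {K : Type*} [Field K] [Fintype K] {n : ℕ} {q : ℕ}

/-- monomial as a function on `X` -/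
def mon (X : Set (Fin n → K)) (μ : Mon n) : ↥X → K := fun x => ∏ i, (x.1 i)^(μ i)

lemma mon_add (X : Set (Fin n → K)) (a b : Mon n) : mon X (a+b) = mon X a * mon X b := by
  funext x
  simp only [mon, Pi.mul_apply, Pi.add_apply, pow_add, ← Finset.prod_mul_distrib]

def SpanLT (X : Set (Fin n → K)) (q : ℕ) (μ : Mon n) : Submodule K (↥X → K) :=
  span K (mon X '' {ν | wt q ν < wt q μ})

def SM (X : Set (Fin n → K)) (q : ℕ) : Set (Mon n) := {μ | mon X μ ∉ SpanLT X q μ}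

section Red
variable (hq : Fintype.card K = q)

lemma two_le_q (hq : Fintype.card K = q) : 2 ≤ q := hq ▸ Fintype.one_lt_card

lemma pow_congr_exp (hq : Fintype.card K = q) (x : K) {a b : ℕ} (ha : 0 < a) (hb : 0 < b)
    (hab : a % (q-1) = b % (q-1)) : x^a = x^b := by
  rcases eq_or_ne x 0 with rfl | hx
  · rw [zero_pow ha.ne', zero_pow hb.ne']
  · have h1 : x ^ (q-1) = 1 := by
      rw [← hq]; exact FiniteField.pow_card_sub_one_eq_one x hx
    have key : ∀ c : ℕ, x ^ c = x ^ (c % (q-1)) := by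
      intro c
      conv_lhs => rw [← Nat.div_add_mod c (q-1)]
      rw [pow_add, pow_mul, h1, one_pow, one_mul]
    rw [key a, key b, hab]

def redE (q a : ℕ) : ℕ := if a = 0 then 0 else (a-1) % (q-1) + 1

lemma redE_le (q a : ℕ) : redE q a ≤ a := by
  rw [redE]
  split
  · omega
  · have := Nat.mod_le (a-1) (q-1); omega

lemma redE_lt (hq2 : 2 ≤ q) (a : ℕ) : redE q a < q := by
  rw [redE]
  split
  · omega
  · have : (a-1) % (q-1) < q-1 := Nat.mod_lt _ (by omega)
    omega

lemma pow_redE (hq : Fintype.card K = q) (x : K) (a : ℕ) : x ^ a = x ^ redE q a := by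
  rcases Nat.eq_zero_or_pos a with rfl | ha
  · rfl
  · rw [redE, if_neg ha.ne']
    refine pow_congr_exp hq x ha (Nat.succ_pos _) ?_
    have h1 : (a-1) % (q-1) ≡ a-1 [MOD q-1] := Nat.mod_modEq _ _
    have h2 : (a-1) % (q-1) + 1 ≡ (a-1) + 1 [MOD q-1] := h1.add_right 1
    have h3 : a - 1 + 1 = a := by omega
    rw [h3] at h2
    exact h2.symm

def redM (q : ℕ) (μ : Mon n) : Mon n := fun i => redE q (μ i)

lemma mon_redM (X : Set (Fin n → K)) (hq : Fintype.card K = q) (μ : Mon n) :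
    mon X (redM q μ) = mon X μ := by
  funext x
  exact Finset.prod_congr rfl fun i _ => (pow_redE hq _ _).symm

lemma SM_subset_cube (X : Set (Fin n → K)) (hq : Fintype.card K = q) :
    ∀ μ ∈ SM X q, ∀ i, μ i < q := by
  intro μ hμ
  by_contra hcon
  push_neg at hcon
  obtain ⟨i, hi⟩ := hcon
  have hq2 := two_le_q hq
  have hle : redM q μ ≤ μ := fun j => redE_le q (μ j)
  have hne : redM q μ ≠ μ := by
    intro h
    have h1 : redE q (μ i) = μ i := congrFun h i
    have h2 := redE_lt hq2 (μ i)
    omega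
  refine hμ (subset_span ⟨redM q μ, ?_, mon_redM X hq μ⟩)
  exact wt_lt_of_le_of_ne (by omega) hle hne

end Red

theorem mon_mem_span_SM (X : Set (Fin n → K)) (hq : Fintype.card K = q) (μ : Mon n) :
    mon X μ ∈ span K (mon X '' {ρ | ρ ∈ SM X q ∧ wt q ρ ≤ wt q μ}) := by
  suffices H : ∀ N (μ : Mon n), wt q μ ≤ N →
      mon X μ ∈ span K (mon X '' {ρ | ρ ∈ SM X q ∧ wt q ρ ≤ wt q μ}) from
    H (wt q μ) μ le_rfl
  intro N
  induction N using Nat.strong_induction_on with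
  | _ N ih =>
    intro μ hμN
    by_cases hμ : μ ∈ SM X q
    · exact subset_span ⟨μ, ⟨hμ, le_rfl⟩, rfl⟩
    · have hmem : mon X μ ∈ SpanLT X q μ := not_not.1 hμ
      refine (span_le.2 ?_) hmem
      rintro _ ⟨ν, hν, rfl⟩
      simp only [Set.mem_setOf_eq] at hν
      have h1 := ih (wt q ν) (lt_of_lt_of_le hν hμN) ν le_rfl
      refine span_mono (Set.image_mono ?_) h1
      intro ρ hρ
      exact ⟨hρ.1, le_trans hρ.2 (le_of_lt hν)⟩

theorem SM_downset (X : Set (Fin n → K)) (hq : Fintype.card K = q) :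
    ∀ μ ∈ SM X q, ∀ ν, ν ≤ μ → ν ∈ SM X q := by
  intro μ hμ ν hνμ
  by_contra hν
  have hq2 := two_le_q hq
  have hmem : mon X ν ∈ SpanLT X q ν := not_not.1 hν
  set u : Mon n := fun i => μ i - ν i with hu
  have hνu : ν + u = μ := by
    funext i
    have h3 : ν i ≤ μ i := hνμ i
    simp only [Pi.add_apply, hu]
    omega
  apply hμ
  have hmul : mon X μ = (LinearMap.mulLeft K (mon X u)) (mon X ν) := by
    rw [LinearMap.mulLeft_apply, ← mon_add, ← hνu]
    congr 1
    funext i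
    simp [add_comm]
  rw [hmul]
  have h2 : (LinearMap.mulLeft K (mon X u)) (mon X ν) ∈
      Submodule.map (LinearMap.mulLeft K (mon X u)) (SpanLT X q ν) :=
    Submodule.mem_map_of_mem hmem
  rw [SpanLT, Submodule.map_span] at h2
  refine (span_le.2 ?_) h2
  rintro _ ⟨_, ⟨ρ, hρ, rfl⟩, rfl⟩
  refine subset_span ⟨ρ + u, ?_, ?_⟩
  · simp only [Set.mem_setOf_eq] at hρ ⊢
    rw [wt_add, ← hνu, wt_add]
    exact Nat.add_lt_add_right hρ _
  · rw [mon_add, LinearMap.mulLeft_apply]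
    exact mul_comm _ _

theorem SM_indep (X : Set (Fin n → K)) (hq : Fintype.card K = q) :
    LinearIndependent K (fun μ : ↥(SM X q) => mon X μ.1) := by
  have hq2 := two_le_q hq
  rw [linearIndependent_iff]
  intro l hl
  by_contra hcon
  have hsupp : l.support.Nonempty := Finsupp.support_nonempty_iff.2 hcon
  obtain ⟨μs, hμmem, hmax⟩ := l.support.exists_max_image (fun μ => wt q μ.1) hsupp
  rw [Finsupp.linearCombination_apply, Finsupp.sum] at hl
  have hsum := Finset.sum_erase_add l.support (fun κ => l κ • mon X κ.1) hμmem
  rw [hl] at hsum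
  have hx : l μs • mon X μs.1 =
      - ∑ κ ∈ l.support.erase μs, l κ • mon X κ.1 := by
    rw [eq_neg_iff_add_eq_zero, add_comm]
    exact hsum
  have hne : l μs ≠ 0 := Finsupp.mem_support_iff.1 hμmem
  have hmonin : mon X μs.1 ∈ SpanLT X q μs.1 := by
    have hrw : mon X μs.1 = (l μs)⁻¹ • (l μs • mon X μs.1) := by
      rw [smul_smul, inv_mul_cancel₀ hne, one_smul]
    rw [hrw, hx]
    refine Submodule.smul_mem _ _ (Submodule.neg_mem _ (Submodule.sum_mem _ ?_))
    intro κ hκ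
    refine Submodule.smul_mem _ _ (subset_span ⟨κ.1, ?_, rfl⟩)
    have h1 : wt q κ.1 ≤ wt q μs.1 := hmax κ (Finset.mem_of_mem_erase hκ)
    have hne2 : κ.1 ≠ μs.1 := by
      intro h
      exact (Finset.ne_of_mem_erase hκ) (Subtype.ext h)
    have hcκ : ∀ i, κ.1 i < 2*q := by
      intro i
      have := SM_subset_cube X hq κ.1 κ.2 i
      omega
    have hcμ : ∀ i, μs.1 i < 2*q := by
      intro i
      have := SM_subset_cube X hq μs.1 μs.2 i
      omega
    have : wt q κ.1 ≠ wt q μs.1 := fun h => hne2 (wt_inj (by omega) hcκ hcμ h)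
    exact lt_of_le_of_ne h1 this
  exact μs.2 hmonin

theorem span_SM_top (X : Set (Fin n → K)) (hq : Fintype.card K = q) :
    span K (mon X '' SM X q) = ⊤ := by
  haveI : Fintype ↥X := Fintype.ofFinite _
  rw [eq_top_iff]
  intro g _
  have hPmem : ∀ P : MvPolynomial (Fin n) K,
      (fun y : ↥X => MvPolynomial.eval y.1 P) ∈ span K (mon X '' Set.univ) := by
    intro P
    have hfun : (fun y : ↥X => MvPolynomial.eval y.1 P) =
        ∑ μ ∈ P.support, (MvPolynomial.coeff μ P) • mon X (fun i => μ i) := by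
      funext y
      rw [MvPolynomial.eval_eq']
      rw [Finset.sum_apply]
      exact Finset.sum_congr rfl fun μ _ => by simp [mon]
    rw [hfun]
    exact Submodule.sum_mem _ fun μ _ =>
      Submodule.smul_mem _ _ (subset_span ⟨_, Set.mem_univ _, rfl⟩)
  have hg : g = ∑ x : ↥X, g x •
      (fun y : ↥X => MvPolynomial.eval y.1 (MvPolynomial.indicator x.1)) := by
    funext y
    rw [Finset.sum_apply]
    rw [Finset.sum_eq_single y]
    · simp [MvPolynomial.eval_indicator_apply_eq_one]
    · intro x _ hxy
      have : y.1 ≠ x.1 := fun h => hxy (Subtype.ext h.symm)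
      simp [MvPolynomial.eval_indicator_apply_eq_zero _ _ this]
    · intro h
      exact absurd (Finset.mem_univ y) h
  have hguniv : g ∈ span K (mon X '' Set.univ) := by
    rw [hg]
    exact Submodule.sum_mem _ fun x _ => Submodule.smul_mem _ _ (hPmem _)
  refine (span_le.2 ?_) hguniv
  rintro _ ⟨μ, _, rfl⟩
  have := mon_mem_span_SM X hq μ
  refine span_mono (Set.image_mono ?_) this
  intro ρ hρ
  exact hρ.1



/-- A polynomial of degree ≤ d vanishing on more than d points of a line vanishes
on the whole line. -/
theorem poly_vanish_line {d : ℕ} (a v : Fin n → K) (hv : v ≠ 0) (γ : Set (Fin n → K))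
    (hγ : γ ⊆ {p | ∃ t : K, p = a + t • v}) (hcard : d < γ.ncard)
    (c : Mon n → K) (T : Finset (Mon n)) (hT : ∀ μ ∈ T, deg μ ≤ d)
    (hvan : ∀ y ∈ γ, ∑ μ ∈ T, c μ * ∏ i, y i ^ μ i = 0) :
    ∀ t : K, ∑ μ ∈ T, c μ * ∏ i, (a i + t * v i) ^ μ i = 0 := by
  classical
  set Q : Polynomial K :=
    ∑ μ ∈ T, Polynomial.C (c μ) * ∏ i, (Polynomial.C (a i) + Polynomial.X * Polynomial.C (v i)) ^ μ i
    with hQ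
  have heval : ∀ t : K, Q.eval t = ∑ μ ∈ T, c μ * ∏ i, (a i + t * v i) ^ μ i := by
    intro t
    rw [hQ, Polynomial.eval_finset_sum]
    refine Finset.sum_congr rfl fun μ _ => ?_
    rw [Polynomial.eval_mul, Polynomial.eval_C, Polynomial.eval_prod]
    congr 1
    refine Finset.prod_congr rfl fun i _ => ?_
    rw [Polynomial.eval_pow, Polynomial.eval_add, Polynomial.eval_C, Polynomial.eval_mul,
      Polynomial.eval_X, Polynomial.eval_C]
  have hdeg : Q.natDegree ≤ d := by
    rw [hQ]
    refine Polynomial.natDegree_sum_le_of_forall_le _ _ fun μ hμ => ?_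
    calc (Polynomial.C (c μ) * ∏ i, (Polynomial.C (a i) + Polynomial.X * Polynomial.C (v i)) ^ μ i).natDegree
        ≤ (Polynomial.C (c μ)).natDegree +
          (∏ i, (Polynomial.C (a i) + Polynomial.X * Polynomial.C (v i)) ^ μ i).natDegree :=
          Polynomial.natDegree_mul_le
      _ ≤ 0 + ∑ i, ((Polynomial.C (a i) + Polynomial.X * Polynomial.C (v i)) ^ μ i).natDegree := by
          rw [Polynomial.natDegree_C]
          exact Nat.add_le_add_left (Polynomial.natDegree_prod_le _ _) _
      _ ≤ ∑ i, μ i * 1 := by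
          rw [Nat.zero_add]
          refine Finset.sum_le_sum fun i _ => ?_
          refine le_trans (Polynomial.natDegree_pow_le) ?_
          refine Nat.mul_le_mul_left _ ?_
          refine le_trans (Polynomial.natDegree_add_le _ _) ?_
          simp [Polynomial.natDegree_C]
          exact le_trans (Polynomial.natDegree_mul_le) (by simp)
      _ ≤ d := by simpa [deg] using hT μ hμ
  obtain ⟨i0, hi0⟩ : ∃ i, v i ≠ 0 := Function.ne_iff.1 hv
  have hγfin : γ.Finite := Set.toFinite γ
  set tf : (Fin n → K) → K := fun p => (p i0 - a i0) / v i0 with htf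
  have htfval : ∀ t : K, tf (a + t • v) = t := by
    intro t
    rw [htf]
    simp only [Pi.add_apply, Pi.smul_apply, smul_eq_mul]
    field_simp
    ring
  set s : Finset K := hγfin.toFinset.image tf with hs
  have hsc : d < s.card := by
    rw [hs, Finset.card_image_of_injOn]
    · rwa [Set.ncard_eq_toFinset_card _ hγfin] at hcard
    · intro y1 h1 y2 h2 he
      simp only [Finset.mem_coe, Set.Finite.mem_toFinset] at h1 h2
      obtain ⟨t1, rfl⟩ := hγ h1
      obtain ⟨t2, rfl⟩ := hγ h2
      rw [htfval, htfval] at he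
      rw [he]
  have hz : ∀ z ∈ s, Q.eval z = 0 := by
    intro z hz
    rw [hs, Finset.mem_image] at hz
    obtain ⟨y, hy, rfl⟩ := hz
    rw [Set.Finite.mem_toFinset] at hy
    obtain ⟨t, rfl⟩ := hγ hy
    rw [htfval, heval]
    have := hvan _ hy
    simpa using this
  have hQ0 : Q = 0 :=
    Polynomial.eq_zero_of_natDegree_lt_card_of_eval_eq_zero' Q s hz (lt_of_le_of_lt hdeg hsc)
  intro t
  rw [← heval t, hQ0, Polynomial.eval_zero]


theorem SM_finite (X : Set (Fin n → K)) (hq : Fintype.card K = q)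
    (hcube : ∀ μ ∈ SM X q, ∀ i, μ i < q) : (SM X q).Finite := by
  have : SM X q ⊆ ↑(Fintype.piFinset fun _ : Fin n => Finset.range q) := by
    intro μ hμ
    simp only [Finset.coe_sort_coe, Finset.mem_coe, Fintype.mem_piFinset, Finset.mem_range]
    exact fun i => hcube μ hμ i
  exact Set.Finite.subset (Finset.finite_toSet _) this

theorem SM_ncard (X : Set (Fin n → K)) (hq : Fintype.card K = q)
    (hfin : (SM X q).Finite) : (SM X q).ncard = X.ncard := by
  haveI : Fintype ↥X := Fintype.ofFinite _
  haveI : Fintype ↥(SM X q) := hfin.fintype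
  have hsp : ⊤ ≤ span K (Set.range fun μ : ↥(SM X q) => mon X μ.1) := by
    rw [← Set.image_eq_range, span_SM_top X hq]
  let b : Basis ↥(SM X q) K (↥X → K) := Basis.mk (SM_indep X hq) hsp
  have h1 : finrank K (↥X → K) = Fintype.card ↥(SM X q) :=
    Module.finrank_eq_card_basis b
  have h2 : finrank K (↥X → K) = Fintype.card ↥X :=
    Module.finrank_fintype_fun_eq_card K
  rw [← Nat.card_coe_set_eq, ← Nat.card_coe_set_eq,
    Nat.card_eq_fintype_card, Nat.card_eq_fintype_card, ← h1, h2]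

theorem card_small_le (X : Set (Fin n → K)) (hq : Fintype.card K = q) (d : ℕ)
    (hfin : (SM X q).Finite) :
    {μ | μ ∈ SM X q ∧ deg μ ≤ d}.ncard ≤
      finrank K ↥(span K (mon X '' {μ : Mon n | deg μ ≤ d})) := by
  classical
  haveI : Fintype ↥X := Fintype.ofFinite _
  set V := span K (mon X '' {μ : Mon n | deg μ ≤ d}) with hV
  set Z := {μ | μ ∈ SM X q ∧ deg μ ≤ d} with hZ
  have hZfin : Z.Finite := hfin.subset fun μ hμ => hμ.1
  haveI : Fintype ↥Z := hZfin.fintype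
  let v : ↥Z → ↥V := fun μ => ⟨mon X μ.1, subset_span ⟨μ.1, μ.2.2, rfl⟩⟩
  have hli0 : LinearIndependent K (fun μ : ↥Z => mon X μ.1) := by
    have := (SM_indep X hq).comp (fun μ : ↥Z => (⟨μ.1, μ.2.1⟩ : ↥(SM X q)))
      (by
        intro μ ν h
        have h' := Subtype.ext_iff.1 h
        exact Subtype.ext h')
    exact this
  have hli : LinearIndependent K v := LinearIndependent.of_comp V.subtype hli0
  have := hli.fintype_card_le_finrank
  rwa [← Nat.card_coe_set_eq, Nat.card_eq_fintype_card]

theorem finrank_le_ncard_of_vanish (X Y : Set (Fin n → K)) (hYX : Y ⊆ X)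
    (V : Submodule K (↥X → K))
    (hvan : ∀ f ∈ V, (∀ y (hy : y ∈ Y), f ⟨y, hYX hy⟩ = 0) → f = 0) :
    finrank K ↥V ≤ Y.ncard := by
  haveI : Fintype ↥Y := Fintype.ofFinite _
  haveI : Fintype ↥X := Fintype.ofFinite _
  let res : (↥X → K) →ₗ[K] (↥Y → K) := LinearMap.funLeft K K (Set.inclusion hYX)
  have hinj : Function.Injective (res ∘ₗ V.subtype) := by
    rw [← LinearMap.ker_eq_bot, LinearMap.ker_eq_bot']
    intro f hf
    refine Subtype.ext (hvan f.1 f.2 fun y hy => ?_)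
    exact congrFun hf ⟨y, hy⟩
  calc finrank K ↥V ≤ finrank K (↥Y → K) :=
      LinearMap.finrank_le_finrank_of_injective hinj
    _ = Fintype.card ↥Y := Module.finrank_fintype_fun_eq_card K
    _ = Y.ncard := by rw [← Nat.card_coe_set_eq, Nat.card_eq_fintype_card]


end S4

open S4 Submodule in
/-- union of lines, `|γ_i| > q^α` implies `|X| ≤ n! · q^{n(1-α)} · |Y|`. -/
theorem statement4 (K : Type*) [Field K] [Fintype K] (q n c : ℕ) (hq : Fintype.card K = q)
    (hn : 1 ≤ n) (α : ℝ) (hα0 : 0 < α) (hα1 : α < 1)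
    (L γ : Fin c → Set (Fin n → K))
    (hL : ∀ i, IsAffineLine (L i)) (hγL : ∀ i, γ i ⊆ L i)
    (hsize : ∀ i, (q : ℝ) ^ α < ((γ i).ncard : ℝ)) :
    (((⋃ i, L i).ncard : ℝ)) ≤
      (Nat.factorial n : ℝ) * (q : ℝ) ^ ((n : ℝ) * (1 - α)) * ((⋃ i, γ i).ncard : ℝ) := by
  classical
  set X : Set (Fin n → K) := ⋃ i, L i with hX
  set Y : Set (Fin n → K) := ⋃ i, γ i with hY
  have hYX : Y ⊆ X := Set.iUnion_mono hγL
  have hq2 : 2 ≤ q := by rw [← hq]; exact Fintype.one_lt_card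
  have hq0 : (0:ℝ) < (q:ℝ) := by
    have : (2:ℝ) ≤ (q:ℝ) := by exact_mod_cast hq2
    linarith
  have hq1 : (1:ℝ) < (q:ℝ) := by
    have : (2:ℝ) ≤ (q:ℝ) := by exact_mod_cast hq2
    linarith
  have hqα_nonneg : (0:ℝ) ≤ (q:ℝ)^α := Real.rpow_nonneg (le_of_lt hq0) α
  set d : ℕ := ⌊(q:ℝ)^α⌋₊ with hd
  have hdq : d < q := by
    rw [hd, Nat.floor_lt hqα_nonneg]
    calc (q:ℝ)^α < (q:ℝ)^(1:ℝ) := Real.rpow_lt_rpow_of_exponent_lt hq1 hα1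
      _ = (q:ℝ) := Real.rpow_one _
  have hγd : ∀ i, d < (γ i).ncard := by
    intro i
    rw [hd, Nat.floor_lt hqα_nonneg]
    exact hsize i
  -- standard monomials
  have hfinSM : (SM X q).Finite := SM_finite X hq (SM_subset_cube X hq)
  set SMF : Finset (Mon n) := hfinSM.toFinset with hSMF
  have hcube : ∀ μ ∈ SMF, ∀ i, μ i < q := fun μ hμ =>
    SM_subset_cube X hq μ (hfinSM.mem_toFinset.1 hμ)
  have hdown : ∀ μ ∈ SMF, ∀ ν, ν ≤ μ → ν ∈ SMF := fun μ hμ ν hν =>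
    hfinSM.mem_toFinset.2 (SM_downset X hq μ (hfinSM.mem_toFinset.1 hμ) ν hν)
  have hTcube : ∀ μ ∈ simpF n q d, ∀ i, μ i < q := fun μ hμ => (mem_simpF.1 hμ).1
  have hTdown : ∀ μ ∈ simpF n q d, ∀ ν, ν ≤ μ → ν ∈ simpF n q d := by
    intro μ hμ ν hν
    rw [mem_simpF] at hμ ⊢
    refine ⟨fun i => lt_of_le_of_lt (hν i) (hμ.1 i), le_trans ?_ hμ.2⟩
    exact Finset.sum_le_sum fun i _ => hν i
  have hHarris := harris q n SMF (simpF n q d) hcube hTcube hdown hTdown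
  -- the intersection is the small-degree part of SM
  have hinter : ((SMF ∩ simpF n q d).card : ℕ) = {μ | μ ∈ SM X q ∧ deg μ ≤ d}.ncard := by
    have hset : ((SMF ∩ simpF n q d : Finset (Mon n)) : Set (Mon n)) =
        {μ | μ ∈ SM X q ∧ deg μ ≤ d} := by
      ext μ
      simp only [Finset.coe_inter, Set.mem_inter_iff, Finset.mem_coe,
        Set.Finite.mem_toFinset, hSMF, mem_simpF, Set.mem_setOf_eq]
      constructor
      · rintro ⟨h1, _, h3⟩
        exact ⟨h1, h3⟩
      · rintro ⟨h1, h2⟩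
        exact ⟨h1, SM_subset_cube X hq μ h1, h2⟩
    rw [← Set.ncard_coe_finset, hset]
  -- the vanishing argument
  set V := span K (mon X '' {μ : Mon n | deg μ ≤ d}) with hV
  have hvan : ∀ f ∈ V, (∀ y (hy : y ∈ Y), f ⟨y, hYX hy⟩ = 0) → f = 0 := by
    intro f hf hfY
    rw [hV] at hf
    obtain ⟨l, hlsupp, hlsum⟩ := Finsupp.mem_span_image_iff_linearCombination K |>.1 hf
    have hsupp : ∀ μ ∈ l.support, deg μ ≤ d := fun μ hμ =>
      (Finsupp.mem_supported K l).1 hlsupp hμ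
    have hfval : ∀ x : ↥X, f x = ∑ μ ∈ l.support, l μ * ∏ j, (x.1 j)^(μ j) := by
      intro x
      rw [← hlsum, Finsupp.linearCombination_apply, Finsupp.sum, Finset.sum_apply]
      exact Finset.sum_congr rfl fun μ _ => by simp [mon]
    funext x
    obtain ⟨i, hxi⟩ : ∃ i, x.1 ∈ L i := Set.mem_iUnion.1 x.2
    obtain ⟨a, v, hv, hLi⟩ := hL i
    have hγsub : γ i ⊆ {p | ∃ t : K, p = a + t • v} := hLi ▸ hγL i
    have hvanγ : ∀ y ∈ γ i, ∑ μ ∈ l.support, l μ * ∏ j, y j ^ μ j = 0 := by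
      intro y hy
      have hyY : y ∈ Y := Set.mem_iUnion.2 ⟨i, hy⟩
      have h0 := hfY y hyY
      rw [hfval ⟨y, hYX hyY⟩] at h0
      exact h0
    have hline := poly_vanish_line a v hv (γ i) hγsub (hγd i) l l.support hsupp hvanγ
    rw [hLi] at hxi
    obtain ⟨t, hxt⟩ := hxi
    have hx1 : ∀ j, x.1 j = a j + t * v j := fun j => by
      rw [hxt]; simp
    rw [Pi.zero_apply, hfval x]
    calc ∑ μ ∈ l.support, l μ * ∏ j, (x.1 j)^(μ j)
        = ∑ μ ∈ l.support, l μ * ∏ j, (a j + t * v j)^(μ j) :=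
          Finset.sum_congr rfl fun μ _ => by
            congr 1
            exact Finset.prod_congr rfl fun j _ => by rw [hx1 j]
      _ = 0 := hline t
  have hrank : {μ | μ ∈ SM X q ∧ deg μ ≤ d}.ncard ≤ Y.ncard :=
    le_trans (card_small_le X hq d hfinSM) (finrank_le_ncard_of_vanish X Y hYX V hvan)
  -- counts
  have h2 : X.ncard = SMF.card := by
    rw [← SM_ncard X hq hfinSM, hSMF, Set.ncard_eq_toFinset_card _ hfinSM]
  have h3 : (d+1)^n ≤ n.factorial * (simpF n q d).card := pow_le_fact_mul_simpF q n d hdq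
  have hnat : X.ncard * (d+1)^n ≤ n.factorial * (q^n * Y.ncard) := by
    calc X.ncard * (d+1)^n
        ≤ X.ncard * (n.factorial * (simpF n q d).card) := Nat.mul_le_mul_left _ h3
      _ = n.factorial * (SMF.card * (simpF n q d).card) := by rw [h2]; ring
      _ ≤ n.factorial * (q^n * (SMF ∩ simpF n q d).card) :=
          Nat.mul_le_mul_left _ hHarris
      _ ≤ n.factorial * (q^n * Y.ncard) := by
          refine Nat.mul_le_mul_left _ (Nat.mul_le_mul_left _ ?_)
          rw [hinter]
          exact hrank
  -- pass to the reals
  have hreal : (X.ncard:ℝ) * ((d:ℝ)+1)^n ≤ (n.factorial:ℝ) * ((q:ℝ)^n * (Y.ncard:ℝ)) := by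
    exact_mod_cast hnat
  have hα_le : (q:ℝ)^α ≤ (d:ℝ)+1 := le_of_lt (Nat.lt_floor_add_one _)
  have hstep : (X.ncard:ℝ) * ((q:ℝ)^α)^n ≤ (n.factorial:ℝ) * ((q:ℝ)^n * (Y.ncard:ℝ)) := by
    refine le_trans ?_ hreal
    refine mul_le_mul_of_nonneg_left ?_ (by positivity)
    exact pow_le_pow_left₀ hqα_nonneg hα_le n
  have hqn : ((q:ℝ))^n = (q:ℝ)^((n:ℝ)*(1-α)) * ((q:ℝ)^α)^n := by
    rw [← Real.rpow_natCast ((q:ℝ)^α) n, ← Real.rpow_natCast (q:ℝ) n,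
      ← Real.rpow_mul (le_of_lt hq0), ← Real.rpow_add hq0]
    congr 1
    ring
  have hApos : (0:ℝ) < ((q:ℝ)^α)^n := by
    have := Real.rpow_pos_of_pos hq0 α
    positivity
  have hfinal : (X.ncard:ℝ) * ((q:ℝ)^α)^n ≤
      ((n.factorial:ℝ) * (q:ℝ)^((n:ℝ)*(1-α)) * (Y.ncard:ℝ)) * ((q:ℝ)^α)^n := by
    calc (X.ncard:ℝ) * ((q:ℝ)^α)^n
        ≤ (n.factorial:ℝ) * ((q:ℝ)^n * (Y.ncard:ℝ)) := hstep
      _ = ((n.factorial:ℝ) * (q:ℝ)^((n:ℝ)*(1-α)) * (Y.ncard:ℝ)) * ((q:ℝ)^α)^n := by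
          rw [hqn]; ring
  exact le_of_mul_le_mul_right hfinal hApos


end
end

section
/- For every n ≥ 1 and every integer Λ ≥ 1 there is a constant C (depending only on n and Λ, not on q) with the following property: for every prime power q, every finite collection Γ_1, …, Γ_c of curves of degree at most Λ in F_q^n, and every choice of subsets γ_i ⊆ Γ_i with |γ_i| ≥ q/2 for each i, one has |⋃_i Γ_i| ≤ C · |⋃_i γ_i|. -/
set_option linter.unusedSectionVars false
set_option maxHeartbeats 1000000



open MvPolynomial

noncomputable section

section StAux
open Set Submodule
open scoped Classical
open Classical Set Submodule Finset

variable {K : Type} [Field K] [Fintype K]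

/-- total degree of an exponent vector -/
def sDeg {n : ℕ} (μ : Fin n → ℕ) : ℕ := ∑ i, μ i

/-- base-(D+1) rank -/
def sRank {n : ℕ} (D : ℕ) (μ : Fin n → ℕ) : ℕ := ∑ i : Fin n, μ i * (D+1)^(i : ℕ)

lemma sRank_lt {n D : ℕ} {μ : Fin n → ℕ} (h : ∀ i, μ i ≤ D) :
    sRank D μ < (D+1)^n := by
  induction n with
  | zero => simp [sRank]
  | succ m ih =>
    have htail := ih (μ := fun i => μ i.succ) (fun i => h i.succ)
    have : sRank D μ = μ 0 + (D+1) * sRank D (fun i : Fin m => μ i.succ) := by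
      rw [sRank, Fin.sum_univ_succ]
      simp only [Fin.val_zero, pow_zero, mul_one, sRank, Finset.mul_sum]
      congr 1
      refine Finset.sum_congr rfl (fun i _ => ?_)
      rw [Fin.val_succ, pow_succ]
      ring
    rw [this, pow_succ]
    have h0 : μ 0 ≤ D := h 0
    have hmul : (D+1) * sRank D (fun i : Fin m => μ i.succ) + (D+1) ≤ (D+1) * (D+1)^m := by
      have : sRank D (fun i : Fin m => μ i.succ) + 1 ≤ (D+1)^m := htail
      calc (D+1) * sRank D (fun i : Fin m => μ i.succ) + (D+1)
          = (D+1) * (sRank D (fun i : Fin m => μ i.succ) + 1) := by ring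
        _ ≤ (D+1) * (D+1)^m := Nat.mul_le_mul_left _ this
    have : (D+1) * (D+1)^m = (D+1)^m * (D+1) := by ring
    omega

lemma sRank_succ {m D : ℕ} (μ : Fin (m+1) → ℕ) :
    sRank D μ = μ 0 + (D+1) * sRank D (fun i : Fin m => μ i.succ) := by
  rw [sRank, Fin.sum_univ_succ]
  simp only [Fin.val_zero, pow_zero, mul_one, sRank, Finset.mul_sum]
  congr 1
  refine Finset.sum_congr rfl (fun i _ => ?_)
  rw [Fin.val_succ, pow_succ]
  ring

lemma sRank_injOn {n D : ℕ} {μ ν : Fin n → ℕ} (hμ : ∀ i, μ i ≤ D) (hν : ∀ i, ν i ≤ D)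
    (h : sRank D μ = sRank D ν) : μ = ν := by
  induction n with
  | zero => funext i; exact absurd i.2 (by omega)
  | succ m ih =>
    rw [sRank_succ, sRank_succ] at h
    have h0 : μ 0 = ν 0 := by
      have e1 : (μ 0 + (D+1) * sRank D (fun i : Fin m => μ i.succ)) % (D+1) = μ 0 := by
        rw [Nat.add_mul_mod_self_left]; exact Nat.mod_eq_of_lt (Nat.lt_succ_of_le (hμ 0))
      have e2 : (ν 0 + (D+1) * sRank D (fun i : Fin m => ν i.succ)) % (D+1) = ν 0 := by
        rw [Nat.add_mul_mod_self_left]; exact Nat.mod_eq_of_lt (Nat.lt_succ_of_le (hν 0))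
      rw [← e1, ← e2, h]
    have htails : sRank D (fun i : Fin m => μ i.succ) = sRank D (fun i : Fin m => ν i.succ) := by
      have := h
      rw [h0] at this
      have hk : (D+1) * sRank D (fun i : Fin m => μ i.succ)
          = (D+1) * sRank D (fun i : Fin m => ν i.succ) := by omega
      exact Nat.eq_of_mul_eq_mul_left (by omega) hk
    have := ih (μ := fun i => μ i.succ) (ν := fun i => ν i.succ)
      (fun i => hμ i.succ) (fun i => hν i.succ) htails
    funext i
    rcases Fin.eq_zero_or_eq_succ i with rfl | ⟨j, rfl⟩
    · exact h0
    · exact congrFun this j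

/-- degree-refining additive injective "key" for the monomial order -/
def sKey {n : ℕ} (D : ℕ) (μ : Fin n → ℕ) : ℕ := sDeg μ * (D+1)^n + sRank D μ

lemma sDeg_add {n : ℕ} (σ μ : Fin n → ℕ) : sDeg (σ + μ) = sDeg σ + sDeg μ := by
  simp [sDeg, Finset.sum_add_distrib]

lemma sRank_add {n D : ℕ} (σ μ : Fin n → ℕ) : sRank D (σ + μ) = sRank D σ + sRank D μ := by
  simp only [sRank, Pi.add_apply, add_mul]
  rw [Finset.sum_add_distrib]

lemma sKey_add {n D : ℕ} (σ μ : Fin n → ℕ) : sKey D (σ + μ) = sKey D σ + sKey D μ := by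
  simp only [sKey, sDeg_add, sRank_add, add_mul]
  ring

lemma sKey_deg_le {n D : ℕ} {μ ν : Fin n → ℕ} (hν : ∀ i, ν i ≤ D)
    (h : sKey D μ < sKey D ν) : sDeg μ ≤ sDeg ν := by
  by_contra hc
  push_neg at hc
  have h1 : sDeg ν + 1 ≤ sDeg μ := hc
  have h2 : sRank D ν < (D+1)^n := sRank_lt hν
  have : sKey D ν < sKey D μ := by
    calc sKey D ν = sDeg ν * (D+1)^n + sRank D ν := rfl
      _ < sDeg ν * (D+1)^n + (D+1)^n := by omega
      _ = (sDeg ν + 1) * (D+1)^n := by ring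
      _ ≤ sDeg μ * (D+1)^n := Nat.mul_le_mul_right _ h1
      _ ≤ sKey D μ := Nat.le_add_right _ _
  omega

lemma sKey_injOn {n D : ℕ} {μ ν : Fin n → ℕ} (hμ : ∀ i, μ i ≤ D) (hν : ∀ i, ν i ≤ D)
    (h : sKey D μ = sKey D ν) : μ = ν := by
  have h1 : sRank D μ < (D+1)^n := sRank_lt hμ
  have h2 : sRank D ν < (D+1)^n := sRank_lt hν
  have hdeg : sDeg μ = sDeg ν := by
    rcases Nat.lt_trichotomy (sDeg μ) (sDeg ν) with hl | he | hg
    · exfalso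
      have : sKey D μ < sKey D ν := by
        calc sKey D μ < sDeg μ * (D+1)^n + (D+1)^n := by unfold sKey; omega
          _ = (sDeg μ + 1) * (D+1)^n := by ring
          _ ≤ sDeg ν * (D+1)^n := Nat.mul_le_mul_right _ hl
          _ ≤ sKey D ν := Nat.le_add_right _ _
      omega
    · exact he
    · exfalso
      have : sKey D ν < sKey D μ := by
        calc sKey D ν < sDeg ν * (D+1)^n + (D+1)^n := by unfold sKey; omega
          _ = (sDeg ν + 1) * (D+1)^n := by ring
          _ ≤ sDeg μ * (D+1)^n := Nat.mul_le_mul_right _ hg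
          _ ≤ sKey D μ := Nat.le_add_right _ _
      omega
  apply sRank_injOn hμ hν
  have : sDeg μ * (D+1)^n = sDeg ν * (D+1)^n := by rw [hdeg]
  unfold sKey at h
  omega

/-- monomial function -/
def mfn {n : ℕ} (μ : Fin n → ℕ) : (Fin n → K) → K := fun x => ∏ i, x i ^ μ i

/-- monomial function restricted to `X` (extended by zero) -/
def sev {n : ℕ} (X : Set (Fin n → K)) (μ : Fin n → ℕ) : (Fin n → K) → K :=
  X.indicator (mfn μ)

lemma mfn_add {n : ℕ} (σ μ : Fin n → ℕ) :
    (mfn (σ + μ) : (Fin n → K) → K) = mfn σ * mfn μ := by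
  funext x
  simp only [mfn, Pi.mul_apply, Pi.add_apply, pow_add]
  rw [Finset.prod_mul_distrib]

lemma sev_mul {n : ℕ} (X : Set (Fin n → K)) (σ μ : Fin n → ℕ) :
    sev X σ * sev X μ = X.indicator (mfn σ) * sev X μ := rfl

lemma indicator_mul_sev {n : ℕ} (X : Set (Fin n → K)) (σ μ : Fin n → ℕ) :
    X.indicator (mfn σ) * sev X μ = sev X (σ + μ) := by
  funext x
  by_cases hx : x ∈ X
  · simp [sev, indicator_of_mem hx, mfn_add]
  · simp [sev, indicator_of_notMem hx]

lemma coord_le_sDeg {n : ℕ} (μ : Fin n → ℕ) (i : Fin n) : μ i ≤ sDeg μ :=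
  Finset.single_le_sum (f := fun j => μ j) (fun _ _ => Nat.zero_le _) (Finset.mem_univ i)

/-- monomials of degree at most `D` -/
def sMb (n D : ℕ) : Finset (Fin n → ℕ) :=
  (Fintype.piFinset fun _ : Fin n => Finset.range (D+1)).filter fun μ => sDeg μ ≤ D

lemma mem_sMb {n D : ℕ} {μ : Fin n → ℕ} : μ ∈ sMb n D ↔ sDeg μ ≤ D := by
  constructor
  · intro h; exact (Finset.mem_filter.mp h).2
  · intro h
    refine Finset.mem_filter.mpr ⟨?_, h⟩
    refine Fintype.mem_piFinset.mpr (fun i => ?_)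
    exact Finset.mem_range.mpr (Nat.lt_succ_of_le ((coord_le_sDeg μ i).trans h))

lemma coords_le_of_mem_sMb {n D : ℕ} {μ : Fin n → ℕ} (h : μ ∈ sMb n D) : ∀ i, μ i ≤ D :=
  fun i => (coord_le_sDeg μ i).trans (mem_sMb.mp h)

variable {n : ℕ}

/-- span of restricted monomials with key smaller than `m` -/
def sSp (X : Set (Fin n → K)) (D m : ℕ) : Submodule K ((Fin n → K) → K) :=
  span K (sev X '' {ν | ν ∈ sMb n D ∧ sKey D ν < m})

/-- greedy basis monomials -/
def sM (X : Set (Fin n → K)) (D : ℕ) : Finset (Fin n → ℕ) :=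
  (sMb n D).filter fun μ => sev X μ ∉ sSp X D (sKey D μ)

/-- the span of all restricted monomials of degree ≤ t -/
def sW (X : Set (Fin n → K)) (t : ℕ) : Submodule K ((Fin n → K) → K) :=
  span K (sev X '' {μ | sDeg μ ≤ t})

/-- target: span of greedy monomials of degree ≤ t -/
def sT (X : Set (Fin n → K)) (D t : ℕ) : Submodule K ((Fin n → K) → K) :=
  span K (sev X '' {μ | μ ∈ sM X D ∧ sDeg μ ≤ t})

lemma sev_mem_sT {X : Set (Fin n → K)} {D t : ℕ} (ht : t ≤ D) :
    ∀ μ : Fin n → ℕ, sDeg μ ≤ t → sev X μ ∈ sT X D t := by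
  -- strong induction on the key
  suffices H : ∀ m : ℕ, ∀ μ : Fin n → ℕ, sKey D μ ≤ m → sDeg μ ≤ t → sev X μ ∈ sT X D t by
    intro μ hμ; exact H (sKey D μ) μ le_rfl hμ
  intro m
  induction m with
  | zero =>
    intro μ hk hd
    by_cases hM : μ ∈ sM X D
    · exact subset_span ⟨μ, ⟨hM, hd⟩, rfl⟩
    · have hμb : μ ∈ sMb n D := mem_sMb.mpr (hd.trans ht)
      have : sev X μ ∈ sSp X D (sKey D μ) := by
        by_contra hc
        exact hM (Finset.mem_filter.mpr ⟨hμb, hc⟩)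
      -- key μ = 0, so the span is over the empty set
      have hempty : {ν : Fin n → ℕ | ν ∈ sMb n D ∧ sKey D ν < sKey D μ} = ∅ := by
        ext ν; simp only [Set.mem_setOf_eq, Set.mem_empty_iff_false, iff_false, not_and]
        intro _; omega
      rw [sSp, hempty, Set.image_empty, span_empty, mem_bot] at this
      rw [this]; exact zero_mem _
  | succ m ih =>
    intro μ hk hd
    by_cases hM : μ ∈ sM X D
    · exact subset_span ⟨μ, ⟨hM, hd⟩, rfl⟩
    · have hμb : μ ∈ sMb n D := mem_sMb.mpr (hd.trans ht)
      have hsp : sev X μ ∈ sSp X D (sKey D μ) := by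
        by_contra hc
        exact hM (Finset.mem_filter.mpr ⟨hμb, hc⟩)
      refine (span_le.mpr ?_) hsp
      rintro v ⟨ν, ⟨hνb, hνk⟩, rfl⟩
      have hdν : sDeg ν ≤ sDeg μ := sKey_deg_le (coords_le_of_mem_sMb hμb) hνk
      exact ih ν (by omega) (hdν.trans hd)

lemma sW_le_sT {X : Set (Fin n → K)} {D t : ℕ} (ht : t ≤ D) : sW X t ≤ sT X D t := by
  rw [sW, span_le]
  rintro v ⟨μ, hμ, rfl⟩
  exact sev_mem_sT ht μ hμ

/-- `sM` is downward closed (division-closed). -/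
lemma sM_downward {X : Set (Fin n → K)} {D : ℕ} {μ ν : Fin n → ℕ}
    (hμ : μ ∈ sM X D) (hle : ∀ i, ν i ≤ μ i) : ν ∈ sM X D := by
  have hμb : μ ∈ sMb n D := (Finset.mem_filter.mp hμ).1
  have hμc := coords_le_of_mem_sMb hμb
  have hνd : sDeg ν ≤ sDeg μ := Finset.sum_le_sum (fun i _ => hle i)
  have hνb : ν ∈ sMb n D := mem_sMb.mpr (hνd.trans (mem_sMb.mp hμb))
  by_contra hc
  have hsp : sev X ν ∈ sSp X D (sKey D ν) := by
    by_contra hc2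
    exact hc (Finset.mem_filter.mpr ⟨hνb, hc2⟩)
  -- multiply by σ = μ - ν
  set σ : Fin n → ℕ := fun i => μ i - ν i with hσ
  have hσν : σ + ν = μ := by
    funext i
    have := hle i
    show μ i - ν i + ν i = μ i
    omega
  -- μ ∉ sM gives contradiction
  have : sev X μ ∈ sSp X D (sKey D μ) := by
    have hmem : sev X μ ∈ Submodule.map (LinearMap.mulLeft K (X.indicator (mfn σ)))
        (sSp X D (sKey D ν)) := by
      refine ⟨sev X ν, hsp, ?_⟩
      simp only [LinearMap.mulLeft_apply]
      rw [indicator_mul_sev, hσν]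
    have hle2 : Submodule.map (LinearMap.mulLeft K (X.indicator (mfn σ)))
        (sSp X D (sKey D ν)) ≤ sSp X D (sKey D μ) := by
      rw [sSp, Submodule.map_span, span_le]
      rintro w ⟨w', ⟨ρ, ⟨hρb, hρk⟩, rfl⟩, rfl⟩
      simp only [LinearMap.mulLeft_apply, SetLike.mem_coe]
      rw [indicator_mul_sev]
      have hρd : sDeg ρ ≤ sDeg ν := sKey_deg_le (coords_le_of_mem_sMb hνb) hρk
      have hσρd : sDeg (σ + ρ) ≤ D := by
        rw [sDeg_add]
        have h1 : sDeg σ + sDeg ν = sDeg μ := by rw [← sDeg_add, hσν]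
        have h2 := mem_sMb.mp hμb
        omega
      have hσρk : sKey D (σ + ρ) < sKey D μ := by
        rw [← hσν, sKey_add, sKey_add]
        omega
      exact subset_span ⟨σ + ρ, ⟨mem_sMb.mpr hσρd, hσρk⟩, rfl⟩
    exact hle2 hmem
  exact (Finset.mem_filter.mp hμ).2 this

/-- doubling: counting greedy monomials at degree `k*t` versus degree `t`. -/
lemma sM_card_div (X : Set (Fin n → K)) (D : ℕ) {k t : ℕ} (hk : 1 ≤ k) :
    ((sM X D).filter fun μ => sDeg μ ≤ k*t).card
      ≤ k^n * ((sM X D).filter fun μ => sDeg μ ≤ t).card := by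
  classical
  set S := (sM X D).filter fun μ => sDeg μ ≤ t with hS
  set T := (sM X D).filter fun μ => sDeg μ ≤ k*t with hT
  have hmaps : ∀ μ ∈ T, ((fun i => μ i / k, fun i => μ i % k) :
      (Fin n → ℕ) × (Fin n → ℕ)) ∈ S ×ˢ (Fintype.piFinset fun _ : Fin n => Finset.range k) := by
    intro μ hμ
    obtain ⟨hμM, hμd⟩ := Finset.mem_filter.mp hμ
    refine Finset.mem_product.mpr ⟨?_, ?_⟩
    · refine Finset.mem_filter.mpr ⟨sM_downward hμM (fun i => Nat.div_le_self _ _), ?_⟩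
      have h1 : (∑ i, μ i / k) * k ≤ ∑ i, μ i := by
        rw [Finset.sum_mul]
        exact Finset.sum_le_sum fun i _ => Nat.div_mul_le_self _ _
      have h2 : sDeg μ ≤ k * t := hμd
      have h3 : (∑ i, μ i / k) * k ≤ t * k := by
        calc (∑ i, μ i / k) * k ≤ ∑ i, μ i := h1
          _ ≤ k * t := h2
          _ = t * k := Nat.mul_comm _ _
      exact Nat.le_of_mul_le_mul_right h3 (by omega)
    · exact Fintype.mem_piFinset.mpr fun i => Finset.mem_range.mpr (Nat.mod_lt _ (by omega))
  have hinj : Set.InjOn (fun μ : Fin n → ℕ => ((fun i => μ i / k, fun i => μ i % k) :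
      (Fin n → ℕ) × (Fin n → ℕ))) T := by
    intro μ hμ ν hν h
    have h1 : (fun i => μ i / k) = fun i => ν i / k := congrArg Prod.fst h
    have h2 : (fun i => μ i % k) = fun i => ν i % k := congrArg Prod.snd h
    funext i
    have e1 := congrFun h1 i
    have e2 := congrFun h2 i
    have d1 : k * (μ i / k) + μ i % k = μ i := Nat.div_add_mod _ _
    have d2 : k * (ν i / k) + ν i % k = ν i := Nat.div_add_mod _ _
    rw [e1, e2] at d1
    omega
  calc T.card ≤ (S ×ˢ (Fintype.piFinset fun _ : Fin n => Finset.range k)).card :=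
        Finset.card_le_card_of_injOn _ hmaps hinj
    _ = S.card * k^n := by
        rw [Finset.card_product, Fintype.card_piFinset]
        simp
    _ = k^n * S.card := Nat.mul_comm _ _

/-- greedy monomials give linearly independent restricted monomial functions. -/
lemma sM_linearIndependent (X : Set (Fin n → K)) (D : ℕ) (s : Finset (Fin n → ℕ))
    (hs : s ⊆ sM X D) :
    LinearIndependent K (fun μ : ↥s => sev X (μ : Fin n → ℕ)) := by
  classical
  rw [Fintype.linearIndependent_iff]
  intro g hsum
  by_contra hc
  push_neg at hc
  obtain ⟨i0, hi0⟩ := hc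
  set sup : Finset ↥s := Finset.univ.filter (fun i => g i ≠ 0) with hsup
  have hne : sup.Nonempty := ⟨i0, Finset.mem_filter.mpr ⟨Finset.mem_univ _, hi0⟩⟩
  obtain ⟨istar, histar, hmax⟩ := Finset.exists_max_image sup
    (fun i => sKey D ((i : ↥s) : Fin n → ℕ)) hne
  have hgstar : g istar ≠ 0 := (Finset.mem_filter.mp histar).2
  have hsum2 : ∑ j ∈ sup, g j • sev X ((j : ↥s) : Fin n → ℕ) = 0 := by
    have he : ∑ j ∈ sup, g j • sev X ((j : ↥s) : Fin n → ℕ)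
        = ∑ j : ↥s, g j • sev X ((j : ↥s) : Fin n → ℕ) := by
      apply Finset.sum_subset (Finset.subset_univ _)
      intro j _ hj
      have : g j = 0 := by
        by_contra hne2
        exact hj (Finset.mem_filter.mpr ⟨Finset.mem_univ _, hne2⟩)
      rw [this, zero_smul]
    rw [he]
    exact hsum
  have hsplit : g istar • sev X ((istar : ↥s) : Fin n → ℕ)
      + ∑ j ∈ sup.erase istar, g j • sev X ((j : ↥s) : Fin n → ℕ) = 0 := by
    rw [Finset.add_sum_erase _ (fun j => g j • sev X ((j : ↥s) : Fin n → ℕ)) histar]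
    exact hsum2
  have h1 : g istar • sev X ((istar : ↥s) : Fin n → ℕ)
      = - ∑ j ∈ sup.erase istar, g j • sev X ((j : ↥s) : Fin n → ℕ) := by
    rw [eq_neg_iff_add_eq_zero]
    exact hsplit
  have h2 : sev X ((istar : ↥s) : Fin n → ℕ)
      = (g istar)⁻¹ • (- ∑ j ∈ sup.erase istar, g j • sev X ((j : ↥s) : Fin n → ℕ)) := by
    rw [← h1, smul_smul, inv_mul_cancel₀ hgstar, one_smul]
  have hstar_mem : sev X ((istar : ↥s) : Fin n → ℕ) ∈
      sSp X D (sKey D ((istar : ↥s) : Fin n → ℕ)) := by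
    rw [h2]
    refine Submodule.smul_mem _ _ (Submodule.neg_mem _ ?_)
    refine Submodule.sum_mem _ (fun j hj => Submodule.smul_mem _ _ (subset_span ?_))
    refine ⟨((j : ↥s) : Fin n → ℕ), ⟨?_, ?_⟩, rfl⟩
    · exact (Finset.mem_filter.mp (hs (j : ↥s).2)).1
    · have hle : sKey D ((j : ↥s) : Fin n → ℕ) ≤ sKey D ((istar : ↥s) : Fin n → ℕ) :=
        hmax j (Finset.mem_of_mem_erase hj)
      rcases lt_or_eq_of_le hle with h | h
      · exact h
      · exfalso
        have hcoordj := coords_le_of_mem_sMb (Finset.mem_filter.mp (hs (j:↥s).2)).1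
        have hcoordi := coords_le_of_mem_sMb (Finset.mem_filter.mp (hs (istar:↥s).2)).1
        have heq := sKey_injOn hcoordj hcoordi h
        have : (j : ↥s) = istar := Subtype.ext heq
        exact (Finset.ne_of_mem_erase hj) this
  have := (Finset.mem_filter.mp (hs (istar : ↥s).2)).2
  exact this hstar_mem

open MvPolynomial in
/-- restriction of a low-degree polynomial function to `X` lies in `sW X t`. -/
lemma indicator_eval_mem_sW (X : Set (Fin n → K)) (P : MvPolynomial (Fin n) K) {t : ℕ}
    (hP : P.totalDegree ≤ t) :
    X.indicator (fun y => MvPolynomial.eval y P) ∈ sW X t := by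
  classical
  have hfun : X.indicator (fun y => MvPolynomial.eval y P)
      = ∑ μ ∈ P.support, P.coeff μ • sev X (fun i => μ i) := by
    funext x
    by_cases hx : x ∈ X
    · rw [indicator_of_mem hx]
      rw [eval_eq']
      rw [Finset.sum_apply]
      refine Finset.sum_congr rfl (fun μ _ => ?_)
      simp [sev, mfn, indicator_of_mem hx]
    · rw [indicator_of_notMem hx]
      rw [Finset.sum_apply]
      symm
      refine Finset.sum_eq_zero (fun μ _ => ?_)
      simp [sev, indicator_of_notMem hx]
  rw [hfun]
  refine Submodule.sum_mem _ (fun μ hμ => Submodule.smul_mem _ _ (subset_span ?_))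
  refine ⟨fun i => μ i, ?_, rfl⟩
  have h1 : (μ.sum fun _ e => e) ≤ P.totalDegree := le_totalDegree hμ
  have h2 : sDeg (fun i => μ i) = μ.sum fun _ e => e := by
    rw [Finsupp.sum_fintype]
    · rfl
    · intro i; rfl
  simp only [Set.mem_setOf_eq]
  omega

open MvPolynomial in
/-- delta functions on points of `X` lie in `sW X (n*(q-1))`. -/
lemma single_mem_sW (X : Set (Fin n → K)) {x : Fin n → K} (hx : x ∈ X) :
    Pi.single x (1 : K) ∈ sW X (n * (Fintype.card K - 1)) := by
  classical
  set q := Fintype.card K with hq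
  have hq2 : 2 ≤ q := Fintype.one_lt_card
  set P : MvPolynomial (Fin n) K := ∏ i, (1 - (MvPolynomial.X i - C (x i))^(q-1)) with hP
  have hdeg : P.totalDegree ≤ n * (q - 1) := by
    refine le_trans (totalDegree_finset_prod _ _) ?_
    have : ∀ i : Fin n, (1 - (MvPolynomial.X i - C (x i))^(q-1)).totalDegree ≤ q - 1 := by
      intro i
      refine le_trans (totalDegree_sub _ _) ?_
      simp only [totalDegree_one, max_le_iff]
      constructor
      · exact Nat.zero_le _
      · refine le_trans (totalDegree_pow _ _) ?_
        have h1 : (MvPolynomial.X i - C (x i)).totalDegree ≤ 1 := by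
          refine le_trans (totalDegree_sub _ _) ?_
          simp [totalDegree_X, totalDegree_C]
        calc (q-1) * (MvPolynomial.X i - C (x i)).totalDegree ≤ (q-1) * 1 :=
              Nat.mul_le_mul_left _ h1
          _ = q - 1 := Nat.mul_one _
    refine le_trans (Finset.sum_le_sum (fun i _ => this i)) ?_
    simp [Finset.sum_const]
  have heval : ∀ y : Fin n → K, MvPolynomial.eval y P = if y = x then 1 else 0 := by
    intro y
    rw [hP, map_prod]
    have hfac : ∀ i : Fin n, MvPolynomial.eval y (1 - (MvPolynomial.X i - C (x i))^(q-1))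
        = if y i = x i then 1 else 0 := by
      intro i
      rw [map_sub, map_one, map_pow, map_sub, eval_X, eval_C]
      by_cases h : y i = x i
      · simp [h, zero_pow (by omega : q - 1 ≠ 0)]
      · have : (y i - x i) ≠ 0 := sub_ne_zero_of_ne h
        rw [FiniteField.pow_card_sub_one_eq_one _ this]
        simp [h]
    by_cases hyx : y = x
    · subst hyx
      simp only [hfac]
      simp
    · have : ∃ i, y i ≠ x i := by
        by_contra hcon
        push_neg at hcon
        exact hyx (funext hcon)
      obtain ⟨i, hi⟩ := this
      rw [if_neg hyx]
      refine Finset.prod_eq_zero (Finset.mem_univ i) ?_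
      rw [hfac i, if_neg hi]
  have hind : X.indicator (fun y => MvPolynomial.eval y P) = Pi.single x (1:K) := by
    funext y
    by_cases hy : y ∈ X
    · rw [indicator_of_mem hy, heval y]
      by_cases hyx : y = x
      · subst hyx; simp [Pi.single_apply]
      · simp [Pi.single_apply, hyx]
    · rw [indicator_of_notMem hy]
      have hyx : y ≠ x := fun h => hy (h ▸ hx)
      simp [Pi.single_apply, hyx]
  rw [← hind]
  exact indicator_eval_mem_sW X P hdeg

/-- linear independence of delta functions -/
lemma singles_linearIndependent (F : Finset (Fin n → K)) :
    LinearIndependent K (fun x : ↥F => (Pi.single (x : Fin n → K) (1:K) : (Fin n → K) → K)) := by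
  classical
  rw [Fintype.linearIndependent_iff]
  intro g hsum x0
  have := congrFun hsum (x0 : Fin n → K)
  simp only [Finset.sum_apply, Pi.smul_apply, Pi.single_apply, smul_eq_mul, mul_ite,
    mul_one, mul_zero, Pi.zero_apply] at this
  have heq : (∑ x : ↥F, if (x0 : Fin n → K) = (x : Fin n → K) then g x else 0) = g x0 := by
    rw [Finset.sum_eq_single x0]
    · simp
    · intro b _ hb
      have : (x0 : Fin n → K) ≠ (b : Fin n → K) := by
        intro h
        exact hb (Subtype.ext h.symm)
      simp [this]
    · intro h
      exact absurd (Finset.mem_univ x0) h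
  rw [heq] at this
  exact this

/-- the count of `X` is at most the number of greedy monomials of degree ≤ n(q-1). -/
lemma ncard_le_sM_card (X : Set (Fin n → K)) :
    X.ncard ≤ ((sM X (n * (Fintype.card K - 1))).filter
      fun μ => sDeg μ ≤ n * (Fintype.card K - 1)).card := by
  classical
  set D := n * (Fintype.card K - 1) with hD
  set S := (sM X D).filter (fun μ => sDeg μ ≤ D) with hS
  set W' : Submodule K ((Fin n → K) → K) := span K ((S.image (sev X) : Finset _) : Set _) with hW'
  have hT_eq : sT X D D = W' := by
    rw [sT, hW']
    congr 1
    rw [Finset.coe_image]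
    congr 1
    ext μ
    simp [hS, Finset.mem_filter]
  have hFin : X.Finite := Set.toFinite X
  set F := hFin.toFinset with hF
  -- each delta lies in W'
  have hmem : ∀ x : ↥F, (Pi.single (x : Fin n → K) (1:K) : (Fin n → K) → K) ∈ W' := by
    intro x
    have hxX : (x : Fin n → K) ∈ X := (Set.Finite.mem_toFinset hFin).mp x.2
    have h1 : Pi.single (x : Fin n → K) (1:K) ∈ sW X D := single_mem_sW X hxX
    have h2 := sW_le_sT (X := X) (D := D) (t := D) le_rfl h1
    rw [hT_eq] at h2
    exact h2
  -- independent family inside W'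
  have hind := singles_linearIndependent F
  have hind' : LinearIndependent K (fun x : ↥F =>
      (⟨Pi.single (x : Fin n → K) (1:K), hmem x⟩ : ↥W')) := by
    refine hind.of_comp W'.subtype
  have hcard := hind'.fintype_card_le_finrank
  have h3 : Fintype.card ↥F = F.card := Fintype.card_coe F
  have h4 : Module.finrank K ↥W' ≤ (S.image (sev X)).card :=
    finrank_span_finset_le_card _
  have h5 : (S.image (sev X)).card ≤ S.card := Finset.card_image_le
  have h6 : X.ncard = F.card := by
    rw [hF, Set.ncard_eq_toFinset_card X hFin]
  omega


/-- a polynomial-combination of monomials of degree ≤ d0 vanishing on all the γ's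
vanishes on all the curves. -/
lemma curve_extend {Λ : ℕ}
    {c : ℕ} (Γ γ : Fin c → Set (Fin n → K))
    (hcurve : ∀ i, IsCurveOfDegree Λ (Γ i)) (hsub : ∀ i, γ i ⊆ Γ i)
    (hcard : ∀ i, (Fintype.card K : ℝ) / 2 ≤ ((γ i).ncard : ℝ))
    {d0 : ℕ} (hd0 : 2 * Λ * d0 ≤ Fintype.card K - 1)
    {m : ℕ} (a : Fin m → K) (μs : Fin m → (Fin n → ℕ)) (hdeg : ∀ j, sDeg (μs j) ≤ d0)
    (hvanish : ∀ y ∈ ⋃ i, γ i, ∑ j, a j * mfn (μs j) y = 0) :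
    ∀ x ∈ ⋃ i, Γ i, ∑ j, a j * mfn (μs j) x = 0 := by
  classical
  intro x hx
  rw [Set.mem_iUnion] at hx
  obtain ⟨i, hxi⟩ := hx
  obtain ⟨f, hf, hΓ⟩ := hcurve i
  set φ : K → (Fin n → K) := fun t => fun i' => (f i').eval t with hφ
  have hxr : x ∈ Set.range φ := by rw [hΓ] at hxi; exact hxi
  obtain ⟨t0, ht0⟩ := hxr
  set u : Polynomial K := ∑ j, Polynomial.C (a j) * ∏ i', (f i') ^ (μs j i') with hu
  have hueval : ∀ t : K, u.eval t = ∑ j, a j * mfn (μs j) (φ t) := by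
    intro t
    rw [hu, Polynomial.eval_finset_sum]
    refine Finset.sum_congr rfl (fun j _ => ?_)
    rw [Polynomial.eval_mul, Polynomial.eval_C, Polynomial.eval_prod]
    simp only [Polynomial.eval_pow]
    rfl
  have hudeg : u.natDegree ≤ Λ * d0 := by
    refine Polynomial.natDegree_sum_le_of_forall_le _ _ (fun j _ => ?_)
    refine le_trans (Polynomial.natDegree_C_mul_le _ _) ?_
    refine le_trans (Polynomial.natDegree_prod_le _ _) ?_
    have : ∀ i' : Fin n, ((f i') ^ (μs j i')).natDegree ≤ μs j i' * Λ := by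
      intro i'
      refine le_trans (Polynomial.natDegree_pow_le) ?_
      exact Nat.mul_le_mul_left _ (hf i')
    refine le_trans (Finset.sum_le_sum (fun i' _ => this i')) ?_
    rw [← Finset.sum_mul]
    have : (∑ i', μs j i') = sDeg (μs j) := rfl
    rw [this, Nat.mul_comm]
    exact Nat.mul_le_mul_left _ (hdeg j)
  -- the parameter set
  have hγfin : (γ i).Finite := Set.toFinite _
  set G : Finset (Fin n → K) := hγfin.toFinset with hG
  set ψ : (Fin n → K) → K := fun y => if h : ∃ t, φ t = y then h.choose else 0 with hψ
  have hψspec : ∀ y ∈ G, φ (ψ y) = y := by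
    intro y hy
    have hyΓ : y ∈ Γ i := hsub i ((Set.Finite.mem_toFinset hγfin).mp hy)
    have : ∃ t, φ t = y := by rw [hΓ] at hyΓ; exact hyΓ
    rw [hψ]
    simp only [dif_pos this]
    exact this.choose_spec
  set T : Finset K := G.image ψ with hT
  have hTcard : T.card = G.card := by
    rw [hT]
    refine Finset.card_image_of_injOn ?_
    intro y1 h1 y2 h2 he
    rw [← hψspec y1 h1, ← hψspec y2 h2, he]
  have hroots : ∀ s ∈ T, u.eval s = 0 := by
    intro s hs
    rw [hT, Finset.mem_image] at hs
    obtain ⟨y, hy, rfl⟩ := hs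
    rw [hueval, hψspec y hy]
    refine hvanish y ?_
    rw [Set.mem_iUnion]
    exact ⟨i, (Set.Finite.mem_toFinset hγfin).mp hy⟩
  have hqle : Fintype.card K ≤ 2 * (γ i).ncard := by
    have := hcard i
    have h2 : (Fintype.card K : ℝ) ≤ 2 * ((γ i).ncard : ℝ) := by linarith
    exact_mod_cast h2
  have hGcard : G.card = (γ i).ncard := by
    rw [hG, Set.ncard_eq_toFinset_card _ hγfin]
  have hdlt : u.natDegree < T.card := by
    rw [hTcard, hGcard]
    have hq2 : 2 ≤ Fintype.card K := Fintype.one_lt_card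
    have : 2 * (Λ * d0) ≤ Fintype.card K - 1 := by
      rw [← Nat.mul_assoc]; exact hd0
    omega
  have hu0 : u = 0 := Polynomial.eq_zero_of_natDegree_lt_card_of_eval_eq_zero' u T hroots hdlt
  have := hueval t0
  rw [hu0] at this
  simp only [Polynomial.eval_zero] at this
  rw [ht0] at this
  exact this.symm

/-- restriction to E is injective on low-degree spans; hence the greedy count at degree d0
is at most |E|. -/
lemma sM_card_le_ncard {Λ c : ℕ} (Γ γ : Fin c → Set (Fin n → K))
    (hcurve : ∀ i, IsCurveOfDegree Λ (Γ i)) (hsub : ∀ i, γ i ⊆ Γ i)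
    (hcard : ∀ i, (Fintype.card K : ℝ) / 2 ≤ ((γ i).ncard : ℝ))
    {d0 : ℕ} (hd0 : 2 * Λ * d0 ≤ Fintype.card K - 1) (D : ℕ) :
    ((sM (⋃ i, Γ i) D).filter fun μ => sDeg μ ≤ d0).card ≤ (⋃ i, γ i).ncard := by
  classical
  set X := ⋃ i, Γ i with hX
  set E := ⋃ i, γ i with hE
  have hEX : E ⊆ X := Set.iUnion_mono hsub
  set S := (sM X D).filter (fun μ => sDeg μ ≤ d0) with hS
  -- the restriction linear map
  set r : ((Fin n → K) → K) →ₗ[K] ((Fin n → K) → K) :=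
    { toFun := fun v => E.indicator v
      map_add' := fun v w => Set.indicator_add E v w
      map_smul' := fun a v => by
        simp only [RingHom.id_apply]
        funext y
        by_cases hy : y ∈ E
        · simp [Set.indicator_of_mem hy]
        · simp [Set.indicator_of_notMem hy] } with hr
  -- key claim: r is injective on the span of S-monomials
  have hkey : ∀ w ∈ span K (sev X '' (S : Set (Fin n → ℕ))), r w = 0 → w = 0 := by
    intro w hw hrw
    rw [mem_span_set'] at hw
    obtain ⟨m, aco, gvec, hsum⟩ := hw
    -- choose monomials
    have hch : ∀ j : Fin m, ∃ μ : Fin n → ℕ, μ ∈ S ∧ sev X μ = (gvec j : (Fin n → K) → K) := by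
      intro j
      obtain ⟨μ, hμ, he⟩ := (gvec j).2
      exact ⟨μ, hμ, he⟩
    set μs : Fin m → (Fin n → ℕ) := fun j => (hch j).choose with hμs
    have hμsS : ∀ j, μs j ∈ S := fun j => (hch j).choose_spec.1
    have hμse : ∀ j, sev X (μs j) = (gvec j : (Fin n → K) → K) := fun j => (hch j).choose_spec.2
    have hw_eq : w = X.indicator (fun z => ∑ j, aco j * mfn (μs j) z) := by
      funext y
      rw [← hsum]
      simp only [Finset.sum_apply, Pi.smul_apply, smul_eq_mul]
      by_cases hy : y ∈ X
      · rw [Set.indicator_of_mem hy]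
        refine Finset.sum_congr rfl (fun j _ => ?_)
        rw [← hμse j]
        simp [sev, Set.indicator_of_mem hy]
      · rw [Set.indicator_of_notMem hy]
        refine Finset.sum_eq_zero (fun j _ => ?_)
        rw [← hμse j]
        simp [sev, Set.indicator_of_notMem hy]
    have hdeg : ∀ j, sDeg (μs j) ≤ d0 := fun j => (Finset.mem_filter.mp (hμsS j)).2
    -- vanishing on E
    have hvan : ∀ y ∈ E, (∑ j, aco j * mfn (μs j) y) = 0 := by
      intro y hy
      have h1 := congrFun hrw y
      rw [hr] at h1
      simp only [LinearMap.coe_mk, AddHom.coe_mk, Pi.zero_apply] at h1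
      rw [Set.indicator_of_mem hy] at h1
      rw [hw_eq] at h1
      rw [Set.indicator_of_mem (hEX hy)] at h1
      exact h1
    have hext := curve_extend Γ γ hcurve hsub hcard hd0 aco μs hdeg hvan
    rw [hw_eq]
    funext y
    by_cases hy : y ∈ X
    · rw [Set.indicator_of_mem hy]
      exact hext y hy
    · rw [Set.indicator_of_notMem hy]
      rfl
  -- independence of the S-monomials
  have hind : LinearIndependent K (fun μ : ↥S => sev X (μ : Fin n → ℕ)) :=
    sM_linearIndependent X D S (Finset.filter_subset _ _)
  have hdisj : Disjoint (span K (Set.range (fun μ : ↥S => sev X (μ : Fin n → ℕ))))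
      (LinearMap.ker r) := by
    rw [Submodule.disjoint_def]
    intro w hw hker
    refine hkey w ?_ (LinearMap.mem_ker.mp hker)
    have : Set.range (fun μ : ↥S => sev X (μ : Fin n → ℕ)) = sev X '' (S : Set (Fin n → ℕ)) := by
      ext v
      constructor
      · rintro ⟨μ, rfl⟩; exact ⟨(μ : Fin n → ℕ), μ.2, rfl⟩
      · rintro ⟨μ, hμ, rfl⟩; exact ⟨⟨μ, hμ⟩, rfl⟩
    rw [this] at hw
    exact hw
  have hmap : LinearIndependent K (fun μ : ↥S => r (sev X (μ : Fin n → ℕ))) := by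
    have := LinearIndependent.map hind hdisj
    exact this
  -- target submodule spanned by deltas on E
  have hEfin : E.Finite := Set.toFinite _
  set FE := hEfin.toFinset with hFE
  set UE : Submodule K ((Fin n → K) → K) :=
    span K ((FE.image fun e => (Pi.single e (1:K) : (Fin n → K) → K)) : Set _) with hUE
  have hmemUE : ∀ μ : ↥S, r (sev X (μ : Fin n → ℕ)) ∈ UE := by
    intro μ
    have hexp : r (sev X (μ : Fin n → ℕ))
        = ∑ e ∈ FE, (mfn (μ : Fin n → ℕ) e) • (Pi.single e (1:K) : (Fin n → K) → K) := by
      funext y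
      rw [hr]
      simp only [LinearMap.coe_mk, AddHom.coe_mk, Finset.sum_apply, Pi.smul_apply,
        Pi.single_apply, smul_eq_mul, mul_ite, mul_one, mul_zero]
      by_cases hy : y ∈ E
      · rw [Set.indicator_of_mem hy]
        have hyFE : y ∈ FE := (Set.Finite.mem_toFinset hEfin).mpr hy
        rw [Finset.sum_eq_single y]
        · simp only [if_pos rfl]
          simp [sev, Set.indicator_of_mem (hEX hy)]
        · intro b _ hb
          rw [if_neg (Ne.symm hb)]
        · intro hcon; exact absurd hyFE hcon
      · rw [Set.indicator_of_notMem hy]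
        symm
        refine Finset.sum_eq_zero (fun e he => ?_)
        have : y ≠ e := by
          intro hc
          exact hy (hc ▸ (Set.Finite.mem_toFinset hEfin).mp he)
        rw [if_neg this]
    rw [hexp]
    exact Submodule.sum_mem _ (fun e he => Submodule.smul_mem _ _
      (subset_span (Finset.mem_coe.mpr (Finset.mem_image_of_mem _ he))))
  have hmap' : LinearIndependent K (fun μ : ↥S =>
      (⟨r (sev X (μ : Fin n → ℕ)), hmemUE μ⟩ : ↥UE)) := by
    refine hmap.of_comp UE.subtype
  have hcard2 := hmap'.fintype_card_le_finrank
  have h3 : Fintype.card ↥S = S.card := Fintype.card_coe S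
  have h4 : Module.finrank K ↥UE ≤ (FE.image fun e => (Pi.single e (1:K) : (Fin n → K) → K)).card :=
    finrank_span_finset_le_card _
  have h5 : (FE.image fun e => (Pi.single e (1:K) : (Fin n → K) → K)).card ≤ FE.card :=
    Finset.card_image_le
  have h6 : E.ncard = FE.card := by rw [hFE, Set.ncard_eq_toFinset_card _ hEfin]
  omega


end StAux

/-- a uniform constant `C = C(n, Λ)` for unions of curves over
all finite fields. -/
theorem statement8 (n Λ : ℕ) (hn : 1 ≤ n) (hΛ : 1 ≤ Λ) :
    ∃ C : ℝ, ∀ (K : Type) (_ : Field K) (_ : Fintype K) (c : ℕ)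
      (Γ γ : Fin c → Set (Fin n → K)),
      (∀ i, IsCurveOfDegree Λ (Γ i)) → (∀ i, γ i ⊆ Γ i) →
      (∀ i, (Fintype.card K : ℝ) / 2 ≤ ((γ i).ncard : ℝ)) →
      (((⋃ i, Γ i).ncard : ℝ)) ≤ C * ((⋃ i, γ i).ncard : ℝ) := by
  classical
  refine ⟨(((4*n*Λ+1)^n : ℕ) : ℝ), ?_⟩
  intro K hK hKf c Γ γ hcurve hsub hcard
  rcases Nat.eq_zero_or_pos c with hc | hc
  · subst hc
    have h1 : (⋃ i : Fin 0, Γ i) = (∅ : Set (Fin n → K)) := Set.iUnion_of_empty _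
    have h2 : (⋃ i : Fin 0, γ i) = (∅ : Set (Fin n → K)) := Set.iUnion_of_empty _
    rw [h1, h2]
    simp
  -- nonempty case
  set q := Fintype.card K with hqdef
  have hq2 : 2 ≤ q := Fintype.one_lt_card
  set X := ⋃ i, Γ i with hX
  set E := ⋃ i, γ i with hE
  have hEX : E ⊆ X := Set.iUnion_mono hsub
  have hE1 : 1 ≤ E.ncard := by
    set i0 : Fin c := ⟨0, hc⟩
    have h1 := hcard i0
    have h2 : (1 : ℝ) ≤ ((γ i0).ncard : ℝ) := by
      have : (2 : ℝ) ≤ (q : ℝ) := by exact_mod_cast hq2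
      linarith
    have h3 : 1 ≤ (γ i0).ncard := by exact_mod_cast h2
    calc 1 ≤ (γ i0).ncard := h3
      _ ≤ E.ncard := Set.ncard_le_ncard (Set.subset_iUnion γ i0) (Set.toFinite E)
  -- main natural-number inequality
  have hnat : X.ncard ≤ (4*n*Λ+1)^n * E.ncard := by
    rcases Nat.lt_or_ge (q - 1) (2*Λ) with hsmall | hbig
    · -- trivial case : q ≤ 2Λ
      have hq2Λ : q ≤ 2*Λ := by omega
      have h1 : X.ncard ≤ q^n := by
        calc X.ncard ≤ (Set.univ : Set (Fin n → K)).ncard :=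
              Set.ncard_le_ncard (Set.subset_univ X) (Set.toFinite _)
          _ = Nat.card (Fin n → K) := Set.ncard_univ _
          _ = Fintype.card (Fin n → K) := Nat.card_eq_fintype_card
          _ = q^n := by rw [Fintype.card_fun, Fintype.card_fin]
      have h2 : q^n ≤ (4*n*Λ+1)^n := by
        refine Nat.pow_le_pow_left ?_ _
        have : 2*Λ ≤ 4*n*Λ := by nlinarith
        omega
      calc X.ncard ≤ (4*n*Λ+1)^n := h1.trans h2
        _ = (4*n*Λ+1)^n * 1 := (Nat.mul_one _).symm
        _ ≤ (4*n*Λ+1)^n * E.ncard := Nat.mul_le_mul_left _ hE1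
    · -- main case
      set d0 := (q-1)/(2*Λ) with hd0def
      have hΛpos : 0 < 2*Λ := by omega
      have hd0pos : 1 ≤ d0 := by
        rw [hd0def]
        exact (Nat.one_le_div_iff hΛpos).mpr hbig
      have hd0 : 2*Λ*d0 ≤ q - 1 := by
        rw [hd0def, Nat.mul_comm]
        exact Nat.div_mul_le_self _ _
      set D := n*(q-1) with hDdef
      set k := D/d0 + 1 with hkdef
      have hk1 : 1 ≤ k := by
        rw [hkdef]
        exact Nat.succ_le_succ (Nat.zero_le _)
      have hDk : D ≤ k*d0 := by
        have h2 : D % d0 < d0 := Nat.mod_lt _ (by omega)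
        calc D = d0*(D/d0) + D%d0 := (Nat.div_add_mod D d0).symm
          _ ≤ d0*(D/d0) + d0 := by omega
          _ = (D/d0 + 1)*d0 := by ring
          _ = k*d0 := by rw [hkdef]
      have hq1 : q - 1 ≤ 4*(Λ*d0) := by
        have e1 : 2*Λ*((q-1)/(2*Λ)) + (q-1)%(2*Λ) = q-1 := Nat.div_add_mod _ _
        have e2 : 2*Λ*((q-1)/(2*Λ)) = 2*(Λ*d0) := by rw [hd0def]; ring
        rw [e2] at e1
        have h2 : (q-1) % (2*Λ) < 2*Λ := Nat.mod_lt _ hΛpos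
        have h4 : Λ ≤ Λ*d0 := Nat.le_mul_of_pos_right _ (by omega)
        omega
      have hkle : k ≤ 4*n*Λ+1 := by
        have hD4 : D ≤ (4*n*Λ)*d0 := by
          calc D = n*(q-1) := rfl
            _ ≤ n*(4*(Λ*d0)) := Nat.mul_le_mul_left _ hq1
            _ = (4*n*Λ)*d0 := by ring
        have h5 : D/d0 ≤ ((4*n*Λ)*d0)/d0 := Nat.div_le_div_right hD4
        have h6 : ((4*n*Λ)*d0)/d0 = 4*n*Λ := Nat.mul_div_cancel _ (by omega)
        rw [hkdef]
        omega
      -- the chain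
      have step1 : X.ncard ≤ ((sM X D).filter fun μ => sDeg μ ≤ D).card := by
        have := ncard_le_sM_card (K := K) (n := n) X
        rw [← hqdef, ← hDdef] at this
        exact this
      have step2 : ((sM X D).filter fun μ => sDeg μ ≤ D).card
          ≤ ((sM X D).filter fun μ => sDeg μ ≤ k*d0).card := by
        refine Finset.card_le_card ?_
        intro μ hμ
        rw [Finset.mem_filter] at hμ ⊢
        exact ⟨hμ.1, hμ.2.trans hDk⟩
      have step3 : ((sM X D).filter fun μ => sDeg μ ≤ k*d0).card
          ≤ k^n * ((sM X D).filter fun μ => sDeg μ ≤ d0).card :=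
        sM_card_div X D hk1
      have step4 : ((sM X D).filter fun μ => sDeg μ ≤ d0).card ≤ E.ncard := by
        have := sM_card_le_ncard (K := K) (n := n) Γ γ hcurve hsub hcard
          (d0 := d0) (by rw [← hqdef]; exact hd0) D
        exact this
      calc X.ncard ≤ k^n * ((sM X D).filter fun μ => sDeg μ ≤ d0).card :=
            (step1.trans step2).trans step3
        _ ≤ k^n * E.ncard := Nat.mul_le_mul_left _ step4
        _ ≤ (4*n*Λ+1)^n * E.ncard :=
            Nat.mul_le_mul_right _ (Nat.pow_le_pow_left hkle _)
  -- cast to ℝ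
  have := (Nat.cast_le (α := ℝ)).mpr hnat
  push_cast at this ⊢
  convert this using 2 <;> push_cast <;> ring

end
end

section
/- Let k be an infinite field and let X be the union of L affine lines in k^n. If cl_d(X) = k^n, then C(d+n, n)/(d+1) ≤ L, where C(d+n, n) is the binomial coefficient. -/
open MvPolynomial

noncomputable section

-- ===== auxiliary lemmas =====

theorem aux_natDegree_aeval_le {k : Type*} [Field k] {n : ℕ} (g : Fin n → Polynomial k)
    (hg : ∀ j, (g j).natDegree ≤ 1) (P : MvPolynomial (Fin n) k) :
    (MvPolynomial.aeval g P).natDegree ≤ P.totalDegree := by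
  rw [MvPolynomial.aeval_def, MvPolynomial.eval₂_eq]
  refine (Polynomial.natDegree_sum_le _ _).trans ?_
  rw [Finset.fold_max_le]
  refine ⟨Nat.zero_le _, fun m hm => ?_⟩
  simp only [Function.comp_apply]
  refine (Polynomial.natDegree_mul_le).trans ?_
  have h1 : (algebraMap k (Polynomial k) (MvPolynomial.coeff m P)).natDegree = 0 :=
    Polynomial.natDegree_C _
  rw [h1, zero_add]
  refine (Polynomial.natDegree_prod_le _ _).trans ?_
  refine le_trans ?_ (MvPolynomial.le_totalDegree hm)
  rw [Finsupp.sum]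
  refine Finset.sum_le_sum fun i _ => ?_
  exact (Polynomial.natDegree_pow_le).trans (by
    calc m i * (g i).natDegree ≤ m i * 1 := Nat.mul_le_mul_left _ (hg i)
    _ = m i := Nat.mul_one _)

theorem aux_eval_line {k : Type*} [Field k] {n : ℕ} (a v : Fin n → k) (t : k)
    (P : MvPolynomial (Fin n) k) :
    Polynomial.eval t (MvPolynomial.aeval
        (fun j => Polynomial.C (a j) + Polynomial.C (v j) * Polynomial.X) P)
      = MvPolynomial.eval (a + t • v) P := by
  induction P using MvPolynomial.induction_on with
  | C c => simp
  | add p q hp hq => simp [hp, hq]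
  | mul_X p j hp =>
    rw [map_mul, Polynomial.eval_mul, hp, map_mul]
    congr 1
    rw [MvPolynomial.aeval_X, MvPolynomial.eval_X]
    rw [Polynomial.eval_add, Polynomial.eval_C, Polynomial.eval_mul,
      Polynomial.eval_C, Polynomial.eval_X]
    show a j + v j * t = (a + t • v) j
    rw [Pi.add_apply, Pi.smul_apply, smul_eq_mul, mul_comm]

def symF {n d : ℕ} (M : Sym (Fin (n+1)) d) : Fin n →₀ ℕ :=
  Finsupp.equivFunOnFinite.symm (fun i => Multiset.count i.castSucc (M : Multiset (Fin (n+1))))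

theorem sum_count_univ {n : ℕ} (s : Multiset (Fin n)) :
    ∑ a : Fin n, Multiset.count a s = Multiset.card s := by
  rw [← Multiset.toFinset_sum_count_eq s]
  refine (Finset.sum_subset (Finset.subset_univ _) ?_).symm
  intro a _ ha
  rw [Multiset.count_eq_zero]
  exact fun h => ha (Multiset.mem_toFinset.mpr h)

theorem symF_sum {n d : ℕ} (M : Sym (Fin (n+1)) d) :
    ((symF M).sum fun _ e => e) ≤ d := by
  rw [Finsupp.sum_fintype _ _ (fun _ => rfl)]
  have h := sum_count_univ (M : Multiset (Fin (n+1)))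
  rw [Sym.card_coe] at h
  calc ∑ i : Fin n, symF M i
      = ∑ i : Fin n, Multiset.count i.castSucc (M : Multiset (Fin (n+1))) := rfl
    _ ≤ ∑ a : Fin (n+1), Multiset.count a (M : Multiset (Fin (n+1))) := by
        rw [Fin.sum_univ_castSucc]; exact Nat.le_add_right _ _
    _ = d := h

theorem symF_inj {n d : ℕ} : Function.Injective (symF (n := n) (d := d)) := by
  intro M1 M2 h
  have hc : ∀ i : Fin n, Multiset.count i.castSucc (M1 : Multiset (Fin (n+1)))
      = Multiset.count i.castSucc (M2 : Multiset (Fin (n+1))) := by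
    intro i
    have := congrFun (congrArg (fun f : (Fin n →₀ ℕ) => (f : Fin n → ℕ)) h) i
    simpa [symF] using this
  have hlast : Multiset.count (Fin.last n) (M1 : Multiset (Fin (n+1)))
      = Multiset.count (Fin.last n) (M2 : Multiset (Fin (n+1))) := by
    have h1 := sum_count_univ (M1 : Multiset (Fin (n+1)))
    have h2 := sum_count_univ (M2 : Multiset (Fin (n+1)))
    rw [Sym.card_coe] at h1 h2
    rw [Fin.sum_univ_castSucc] at h1 h2
    have : ∑ i : Fin n, Multiset.count i.castSucc (M1 : Multiset (Fin (n+1)))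
        = ∑ i : Fin n, Multiset.count i.castSucc (M2 : Multiset (Fin (n+1))) :=
      Finset.sum_congr rfl (fun i _ => hc i)
    omega
  apply Subtype.ext
  ext a
  rcases Fin.eq_castSucc_or_eq_last a with ⟨i, rfl⟩ | rfl
  · exact hc i
  · exact hlast


/-- over an infinite field, if `X` is a union of `L` lines and
`cl_d(X) = k^n`, then `C(d+n, n)/(d+1) ≤ L`. -/
theorem statement13 (k : Type*) [Field k] [Infinite k] (n L : ℕ)
    (ℓ : Fin L → Set (Fin n → k)) (hℓ : ∀ i, IsAffineLine (ℓ i)) (d : ℕ)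
    (hcl : clDeg d (⋃ i, ℓ i) = Set.univ) :
    (((d + n).choose n : ℝ)) / ((d : ℝ) + 1) ≤ (L : ℝ) := by
  classical
  choose a v hv hset using hℓ
  set g : Fin L → Fin n → Polynomial k :=
    fun i j => Polynomial.C (a i j) + Polynomial.C (v i j) * Polynomial.X with hgdef
  have hgdeg : ∀ i j, (g i j).natDegree ≤ 1 := by
    intro i j
    refine (Polynomial.natDegree_add_le _ _).trans (max_le ?_ ?_)
    · simp
    · exact (Polynomial.natDegree_C_mul_le _ _).trans (le_of_eq Polynomial.natDegree_X)
  have hmem : ∀ (i : Fin L) (P : restrictTotalDegree (Fin n) k d),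
      (MvPolynomial.aeval (g i)) (P : MvPolynomial (Fin n) k) ∈ Polynomial.degreeLT k (d+1) := by
    intro i P
    rw [Polynomial.mem_degreeLT]
    have hd : (MvPolynomial.aeval (g i) (P : MvPolynomial (Fin n) k)).natDegree ≤ d :=
      (aux_natDegree_aeval_le _ (hgdeg i) _).trans ((mem_restrictTotalDegree _ _ _).mp P.2)
    calc Polynomial.degree _
        ≤ ((MvPolynomial.aeval (g i) (P : MvPolynomial (Fin n) k)).natDegree : WithBot ℕ) :=
          Polynomial.degree_le_natDegree
      _ ≤ (d : WithBot ℕ) := by exact_mod_cast hd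
      _ < ((d+1 : ℕ) : WithBot ℕ) := by exact_mod_cast Nat.lt_succ_self d
  let Φ : restrictTotalDegree (Fin n) k d →ₗ[k] (Fin L → Fin (d+1) → k) :=
    LinearMap.pi (fun i =>
      (Polynomial.degreeLTEquiv k (d+1)).toLinearMap ∘ₗ
      LinearMap.codRestrict (Polynomial.degreeLT k (d+1))
        ((MvPolynomial.aeval (g i)).toLinearMap ∘ₗ (restrictTotalDegree (Fin n) k d).subtype)
        (fun P => hmem i P))
  have hker : LinearMap.ker Φ = ⊥ := by
    rw [LinearMap.ker_eq_bot']
    intro P hP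
    have hz : ∀ i, MvPolynomial.aeval (g i) (P : MvPolynomial (Fin n) k) = 0 := by
      intro i
      have h0 : Polynomial.degreeLTEquiv k (d+1)
          ⟨MvPolynomial.aeval (g i) (P : MvPolynomial (Fin n) k), hmem i P⟩ = 0 :=
        congrFun hP i
      have h1 := (Polynomial.degreeLTEquiv k (d+1)).map_eq_zero_iff.mp h0
      exact Subtype.ext_iff.mp h1
    have hvan : ∀ y ∈ (⋃ i, ℓ i), MvPolynomial.eval y (P : MvPolynomial (Fin n) k) = 0 := by
      intro y hy
      obtain ⟨i, hyi⟩ := Set.mem_iUnion.mp hy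
      rw [hset i] at hyi
      obtain ⟨t, rfl⟩ := hyi
      rw [← aux_eval_line (a i) (v i) t, hz i, Polynomial.eval_zero]
    have hall : ∀ x : Fin n → k, MvPolynomial.eval x (P : MvPolynomial (Fin n) k) = 0 := by
      intro x
      have hx : x ∈ clDeg d (⋃ i, ℓ i) := by rw [hcl]; trivial
      exact hx _ ((mem_restrictTotalDegree _ _ _).mp P.2) hvan
    have hzero : (P : MvPolynomial (Fin n) k) = 0 :=
      MvPolynomial.funext (fun x => by rw [hall x, map_zero])
    exact Subtype.ext hzero
  have hPmem : ∀ M : Sym (Fin (n+1)) d,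
      (monomial (symF M) (1:k)) ∈ restrictTotalDegree (Fin n) k d := by
    intro M
    rw [mem_restrictTotalDegree]
    rw [totalDegree_monomial _ (one_ne_zero)]
    exact symF_sum M
  let F : Sym (Fin (n+1)) d → restrictTotalDegree (Fin n) k d :=
    fun M => ⟨monomial (symF M) 1, hPmem M⟩
  have hFind : LinearIndependent k F := by
    apply LinearIndependent.of_comp (restrictTotalDegree (Fin n) k d).subtype
    have heq : (⇑(restrictTotalDegree (Fin n) k d).subtype ∘ F)
        = ⇑(basisMonomials (Fin n) k) ∘ symF := by
      funext M
      simp [F, coe_basisMonomials]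
    rw [heq]
    exact (basisMonomials (Fin n) k).linearIndependent.comp symF symF_inj
  have hind2 : LinearIndependent k (⇑Φ ∘ F) := hFind.map' Φ hker
  have hcard := hind2.fintype_card_le_finrank
  have h1 : Fintype.card (Sym (Fin (n+1)) d) = (d+n).choose n := by
    rw [Sym.card_sym_eq_choose, Fintype.card_fin]
    have he : n + 1 + d - 1 = d + n := by omega
    rw [he]
    have := Nat.choose_symm (n := d + n) (k := n) (Nat.le_add_left n d)
    have he2 : d + n - n = d := by omega
    rw [he2] at this
    exact this
  have h2 : Module.finrank k (Fin L → Fin (d+1) → k) = L * (d+1) := by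
    rw [Module.finrank_pi_fintype]
    simp [Module.finrank_pi]
  rw [h1, h2] at hcard
  rw [div_le_iff₀ (by positivity : (0:ℝ) < (d:ℝ) + 1)]
  calc (((d + n).choose n : ℕ) : ℝ) ≤ ((L * (d+1) : ℕ) : ℝ) := by exact_mod_cast hcard
    _ = (L : ℝ) * ((d:ℝ) + 1) := by push_cast; ring


end
end
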